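/- arXiv:2010.07677 — 6 statements merged into one kernel-verified Lean document; each statement's English description precedes it below -/
import Mathlib

section
/- For 1 < t < 2 there exist constants c, C > 0 such that for all x, y ∈ ℝ^n: c (1+|x|^2+|y|^2)^{(1-t)/2} |x-y| ≤ |V_t(x) - V_t(y)| ≤ C (1+|x|^2+|y|^2)^{(1-t)/2} |x-y|. -/
open Real

/-- Key scalar inequality: `(1+u²)^β v ≤ (1+v²)^β (2βu + (1-2β)v)` for `0 ≤ v ≤ u`,
`0 < β < 1/2`. -/
private lemma vpot_bkey {β u v : ℝ} (hβ0 : 0 < β) (hβ : β < 1/2) (hv : 0 ≤ v) (huv : v ≤ u) :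
    (1 + u^2) ^ β * v ≤ (1 + v^2) ^ β * (2*β*u + (1-2*β)*v) := by
  have hu : 0 ≤ u := hv.trans huv
  have hB : (0:ℝ) < 1 + v^2 := by positivity
  have hA : (0:ℝ) < 1 + u^2 := by positivity
  have hsB : 0 < Real.sqrt (1 + v^2) := Real.sqrt_pos.mpr hB
  have hsqB : Real.sqrt (1 + v^2) ^ 2 = 1 + v^2 := Real.sq_sqrt hB.le
  have hvsB : v ≤ Real.sqrt (1 + v^2) := by
    nlinarith [hsB, hsqB]
  have h1 : Real.sqrt (1 + u^2) ≤ Real.sqrt (1 + v^2) + (u - v) := by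
    have h2 : (1 + u^2) ≤ (Real.sqrt (1 + v^2) + (u - v))^2 := by
      nlinarith [hvsB, sub_nonneg.mpr huv, hsqB]
    calc Real.sqrt (1 + u^2) ≤ Real.sqrt ((Real.sqrt (1 + v^2) + (u - v))^2) :=
          Real.sqrt_le_sqrt h2
      _ = Real.sqrt (1 + v^2) + (u - v) := Real.sqrt_sq (by linarith)
  set w : ℝ := (u - v) / Real.sqrt (1 + v^2) with hw
  have hw0 : 0 ≤ w := div_nonneg (by linarith) hsB.le
  have hfac : Real.sqrt (1 + v^2) + (u - v) = Real.sqrt (1 + v^2) * (1 + w) := by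
    rw [hw]; field_simp
  -- (1+u²)^β = (√(1+u²))^(2β) ≤ (√(1+v²)(1+w))^(2β) = (1+v²)^β (1+w)^(2β)
  have e1 : (1 + u^2 : ℝ) ^ β = Real.sqrt (1 + u^2) ^ (2*β) := by
    rw [show (2*β : ℝ) = 2 * β from rfl, Real.rpow_mul (Real.sqrt_nonneg _),
      Real.rpow_two, Real.sq_sqrt hA.le]
  have e2 : (1 + v^2 : ℝ) ^ β = Real.sqrt (1 + v^2) ^ (2*β) := by
    rw [Real.rpow_mul (Real.sqrt_nonneg _), Real.rpow_two, hsqB]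
  have h3 : Real.sqrt (1 + u^2) ^ (2*β) ≤
      Real.sqrt (1 + v^2) ^ (2*β) * (1 + w) ^ (2*β) := by
    rw [← Real.mul_rpow hsB.le (by linarith)]
    exact Real.rpow_le_rpow (Real.sqrt_nonneg _) (by rw [← hfac]; exact h1) (by linarith)
  have hbern : (1 + w) ^ (2*β) ≤ 1 + (2*β) * w :=
    rpow_one_add_le_one_add_mul_self (by linarith) (by linarith) (by linarith)
  have h4 : (1 + u^2 : ℝ) ^ β ≤ (1 + v^2) ^ β * (1 + 2*β*w) := by
    rw [e1, e2]
    calc Real.sqrt (1 + u^2) ^ (2*β) ≤ Real.sqrt (1 + v^2) ^ (2*β) * (1 + w) ^ (2*β) := h3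
      _ ≤ Real.sqrt (1 + v^2) ^ (2*β) * (1 + 2*β*w) := by
          apply mul_le_mul_of_nonneg_left _ (Real.rpow_nonneg (Real.sqrt_nonneg _) _)
          calc (1 + w) ^ (2*β) ≤ 1 + (2*β) * w := hbern
            _ = 1 + 2*β*w := by ring
  have hwv : w * v ≤ u - v := by
    rw [hw, div_mul_eq_mul_div, div_le_iff₀ hsB]
    nlinarith [hvsB, sub_nonneg.mpr huv]
  have hBpos : 0 < (1 + v^2 : ℝ) ^ β := Real.rpow_pos_of_pos hB β
  calc (1 + u^2 : ℝ) ^ β * v ≤ ((1 + v^2) ^ β * (1 + 2*β*w)) * v := by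
        apply mul_le_mul_of_nonneg_right h4 hv
    _ = (1 + v^2) ^ β * (v + 2*β*(w*v)) := by ring
    _ ≤ (1 + v^2) ^ β * (2*β*u + (1-2*β)*v) := by
        apply mul_le_mul_of_nonneg_left _ hBpos.le
        nlinarith [hwv]

/-- Pure algebra step used in `vpot_s1`. -/
private lemma vpot_alg {pA pB u v c : ℝ} (hpA : 0 < pA) (hpB : 0 < pB)
    (h : c * (u - v) * pB ≤ u * pB - v * pA) :
    c * pA⁻¹ * (u - v) ≤ u * pA⁻¹ - v * pB⁻¹ := by
  rw [← sub_nonneg]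
  have e : u * pA⁻¹ - v * pB⁻¹ - c * pA⁻¹ * (u - v)
      = (u * pB - v * pA - c * (u - v) * pB) / (pA * pB) := by
    field_simp
  rw [e]
  exact div_nonneg (by linarith) (by positivity)

/-- Scalar lower bound: `(1-2β)(1+u²)^(-β)(u-v) ≤ u(1+u²)^(-β) - v(1+v²)^(-β)`. -/
private lemma vpot_s1 {β u v : ℝ} (hβ0 : 0 < β) (hβ : β < 1/2) (hv : 0 ≤ v) (huv : v ≤ u) :
    (1-2*β) * (1 + u^2) ^ (-β) * (u - v) ≤ u * (1 + u^2) ^ (-β) - v * (1 + v^2) ^ (-β) := by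
  have hB : (0:ℝ) < 1 + v^2 := by positivity
  have hA : (0:ℝ) < 1 + u^2 := by positivity
  have hpA : 0 < (1 + u^2 : ℝ) ^ β := Real.rpow_pos_of_pos hA β
  have hpB : 0 < (1 + v^2 : ℝ) ^ β := Real.rpow_pos_of_pos hB β
  have key := vpot_bkey hβ0 hβ hv huv
  rw [Real.rpow_neg hA.le, Real.rpow_neg hB.le]
  exact vpot_alg hpA hpB (by nlinarith [key])

set_option maxHeartbeats 2000000 in
/-- Core two-sided estimate, assuming `‖y‖ ≤ ‖x‖`. -/
private lemma vpot_core {E : Type*} [NormedAddCommGroup E] [InnerProductSpace ℝ E]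
    {β : ℝ} (hβ0 : 0 < β) (hβ : β < 1/2) (x y : E) (hxy : ‖y‖ ≤ ‖x‖) :
    ((1-2*β)/2) * ((1 + ‖x‖^2 + ‖y‖^2) ^ (-β)) * ‖x - y‖ ≤
      ‖((1 + ‖x‖^2 : ℝ) ^ (-β)) • x - ((1 + ‖y‖^2 : ℝ) ^ (-β)) • y‖ ∧
    ‖((1 + ‖x‖^2 : ℝ) ^ (-β)) • x - ((1 + ‖y‖^2 : ℝ) ^ (-β)) • y‖ ≤
      4 * ((1 + ‖x‖^2 + ‖y‖^2) ^ (-β)) * ‖x - y‖ := by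
  set u := ‖x‖ with hu
  set v := ‖y‖ with hvdef
  have hv0 : 0 ≤ v := norm_nonneg y
  have hu0 : 0 ≤ u := norm_nonneg x
  have hA : (0:ℝ) < 1 + u^2 := by positivity
  have hB : (0:ℝ) < 1 + v^2 := by positivity
  have hM : (0:ℝ) < 1 + u^2 + v^2 := by positivity
  set a := (1 + u^2 : ℝ) ^ (-β) with ha'
  set b := (1 + v^2 : ℝ) ^ (-β) with hb'
  set K := (1 + u^2 + v^2 : ℝ) ^ (-β) with hK'
  have haP : 0 < a := Real.rpow_pos_of_pos hA _
  have hbP : 0 < b := Real.rpow_pos_of_pos hB _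
  have hKP : 0 < K := Real.rpow_pos_of_pos hM _
  have hab : a ≤ b := Real.rpow_le_rpow_of_nonpos hB (by nlinarith) (by linarith)
  have hKa : K ≤ a := Real.rpow_le_rpow_of_nonpos hA (by nlinarith) (by linarith)
  have ha2K : a ≤ 2 * K := by
    have h1 : ((2:ℝ) * (1 + u^2)) ^ (-β) ≤ K :=
      Real.rpow_le_rpow_of_nonpos hM (by nlinarith) (by linarith)
    have h2 : ((2:ℝ) * (1 + u^2)) ^ (-β) = (2:ℝ)^(-β) * a := by
      rw [ha', Real.mul_rpow (by norm_num) hA.le]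
    have h3 : (1/2 : ℝ) ≤ (2:ℝ)^(-β) := by
      have := Real.rpow_le_rpow_of_exponent_le (x := 2) (by norm_num)
        (show (-1:ℝ) ≤ -β by linarith)
      rw [Real.rpow_neg_one] at this
      linarith [this]
    nlinarith [h1, h2, h3, haP]
  have hKab : K^2 ≤ a * b := by
    have h1 : ((1 + u^2 + v^2 :ℝ) * (1 + u^2 + v^2)) ^ (-β) ≤ ((1 + u^2) * (1 + v^2)) ^ (-β) :=
      Real.rpow_le_rpow_of_nonpos (by positivity) (by nlinarith) (by linarith)
    rw [Real.mul_rpow hM.le hM.le, Real.mul_rpow hA.le hB.le] at h1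
    calc K^2 = K * K := sq K
      _ ≤ a * b := h1
  have hS1 : (1-2*β) * K * (u - v) ≤ a*u - b*v := by
    have h1 := vpot_s1 hβ0 hβ hv0 hxy
    have h2 : (1-2*β) * K * (u - v) ≤ (1-2*β) * a * (u - v) := by
      apply mul_le_mul_of_nonneg_right _ (by linarith)
      apply mul_le_mul_of_nonneg_left hKa (by linarith)
    calc (1-2*β) * K * (u - v) ≤ (1-2*β) * a * (u - v) := h2
      _ ≤ a*u - b*v := by rw [ha', hb']; linarith [h1]
  have hmono : 0 ≤ a*u - b*v := by
    have h0 : 0 ≤ (1-2*β) * K * (u - v) :=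
      mul_nonneg (mul_nonneg (by linarith) hKP.le) (by linarith)
    linarith [hS1]
  -- upper scalar endpoint estimates
  have hup1 : a*u - b*v ≤ 4*K*(u-v) := by nlinarith [hab, ha2K, sub_nonneg.mpr hxy, hKP]
  have hup2 : a*u + b*v ≤ 4*K*(u+v) := by nlinarith [hmono, ha2K, hKP, hu0, hv0]
  -- inner product facts
  set p := (inner ℝ x y : ℝ) with hp'
  have hple : p ≤ u * v := real_inner_le_norm x y
  have hpge : -(u*v) ≤ p := by
    have := abs_real_inner_le_norm x y
    rw [abs_le] at this
    exact this.1
  have hT : ‖x - y‖^2 = u^2 - 2*p + v^2 := norm_sub_sq_real x y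
  have hN : ‖a • x - b • y‖^2 = a^2*u^2 - 2*(a*b*p) + b^2*v^2 := by
    rw [norm_sub_sq_real, norm_smul, norm_smul, real_inner_smul_left, real_inner_smul_right,
      Real.norm_eq_abs, Real.norm_eq_abs, abs_of_pos haP, abs_of_pos hbP]
    rw [← hu, ← hvdef, ← hp']
    ring
  have hc0 : 0 ≤ (1-2*β)/2 := by linarith
  have huv' : v ≤ u := hxy
  clear_value a b K u v p
  constructor
  · -- lower bound
    have key1 : ((1-2*β)/2 * K * (u-v))^2 ≤ (a*u - b*v)^2 := by
      apply pow_le_pow_left₀ (by nlinarith [hKP, sub_nonneg.mpr huv'])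
      nlinarith [hS1, hKP, sub_nonneg.mpr huv']
    have hc1 : ((1-2*β)/2)^2 ≤ 1 := by nlinarith
    have key2 : ((1-2*β)/2)^2 * K^2 ≤ a*b := by
      nlinarith [mul_le_mul_of_nonneg_right hc1 (sq_nonneg K), hKab]
    have hprod : ((1-2*β)/2)^2 * K^2 * (2*u*v - 2*p) ≤ a*b*(2*u*v - 2*p) :=
      mul_le_mul_of_nonneg_right key2 (by linarith)
    have hsq : ((1-2*β)/2 * K * ‖x - y‖)^2 ≤ ‖a • x - b • y‖^2 := by
      rw [hN]
      have expand : ((1-2*β)/2 * K * ‖x - y‖)^2 = ((1-2*β)/2)^2 * K^2 * (u^2 - 2*p + v^2) := by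
        rw [mul_pow, mul_pow, hT]
      rw [expand]
      nlinarith [key1, hprod]
    have := pow_le_pow_iff_left₀ (a := (1-2*β)/2 * K * ‖x - y‖)
      (b := ‖a • x - b • y‖) (by positivity) (norm_nonneg _) (two_ne_zero)
    exact this.mp hsq
  · -- upper bound
    have hsq : ‖a • x - b • y‖^2 ≤ (4 * K * ‖x - y‖)^2 := by
      rw [hN]
      have expand : (4 * K * ‖x - y‖)^2 = 4^2 * K^2 * (u^2 - 2*p + v^2) := by
        rw [mul_pow, mul_pow, hT]
      rw [expand]
      have hD : (b - a) * (b*v^2 - a*u^2) ≤ 0 := by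
        apply mul_nonpos_of_nonneg_of_nonpos (by linarith)
        nlinarith [hmono, hv0, hxy, haP, hbP]
      rcases le_or_gt (a*b) (16 * K^2) with hcase | hcase
      · have hT0 : 0 ≤ u^2 - 2*p + v^2 := by nlinarith [hple]
        nlinarith [mul_le_mul_of_nonneg_right hcase hT0, hD]
      · have hTle : u^2 - 2*p + v^2 ≤ (u+v)^2 := by nlinarith [hpge]
        have key3 : (a*u + b*v)^2 ≤ (4*K*(u+v))^2 := by
          apply pow_le_pow_left₀ (by positivity) hup2
        have f1 : (a*b - 16*K^2)*(u^2-2*p+v^2) ≤ (a*b - 16*K^2)*((u+v)^2) :=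
          mul_le_mul_of_nonneg_left hTle (by linarith)
        have f2 : (a*u + b*v)^2 ≤ 16*K^2*(u+v)^2 := by nlinarith [key3]
        nlinarith [f1, f2, hD]
    have := pow_le_pow_iff_left₀ (a := ‖a • x - b • y‖)
      (b := 4 * K * ‖x - y‖) (norm_nonneg _) (by positivity) (two_ne_zero)
    exact this.mp hsq

/-- Property (V1): for `1 < t < 2` the finite differences of the V-potential satisfy
`|V_t x − V_t y| ∼ (1+|x|²+|y|²)^((1−t)/2) |x−y|` with uniform constants. -/
theorem vpotential_difference_equiv {n : ℕ} {t : ℝ} (ht1 : 1 < t) (ht2 : t < 2) :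
    ∃ c C : ℝ, 0 < c ∧ 0 < C ∧ ∀ x y : EuclideanSpace ℝ (Fin n),
      c * (((1 : ℝ) + ‖x‖ ^ 2 + ‖y‖ ^ 2) ^ ((1 - t) / 2)) * ‖x - y‖ ≤
        ‖(((1 : ℝ) + ‖x‖ ^ 2) ^ ((1 - t) / 2)) • x -
          (((1 : ℝ) + ‖y‖ ^ 2) ^ ((1 - t) / 2)) • y‖ ∧
      ‖(((1 : ℝ) + ‖x‖ ^ 2) ^ ((1 - t) / 2)) • x -
          (((1 : ℝ) + ‖y‖ ^ 2) ^ ((1 - t) / 2)) • y‖ ≤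
        C * (((1 : ℝ) + ‖x‖ ^ 2 + ‖y‖ ^ 2) ^ ((1 - t) / 2)) * ‖x - y‖ := by
  set β : ℝ := (t - 1) / 2 with hβ'
  have hβ0 : 0 < β := by rw [hβ']; linarith
  have hβhalf : β < 1/2 := by rw [hβ']; linarith
  have hexp : (1 - t) / 2 = -β := by rw [hβ']; ring
  refine ⟨(1-2*β)/2, 4, by linarith, by norm_num, fun x y => ?_⟩
  rw [hexp]
  rcases le_total ‖y‖ ‖x‖ with h | h
  · exact vpot_core hβ0 hβhalf x y h
  · have key := vpot_core hβ0 hβhalf y x h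
    have e1 : ((1:ℝ) + ‖x‖^2 + ‖y‖^2) = (1 + ‖y‖^2 + ‖x‖^2) := by ring
    have e2 : ‖x - y‖ = ‖y - x‖ := norm_sub_rev x y
    have e3 : ‖((1 + ‖x‖^2 : ℝ) ^ (-β)) • x - ((1 + ‖y‖^2 : ℝ) ^ (-β)) • y‖
        = ‖((1 + ‖y‖^2 : ℝ) ^ (-β)) • y - ((1 + ‖x‖^2 : ℝ) ^ (-β)) • x‖ := norm_sub_rev _ _
    rw [e1, e2, e3]
    exact key
end

section
/- Let 1 < t < 2 and 1 < a. There is a constant C > 0 such that for all x, y ∈ ℝ^n: |V_t(x) - V_t(y)|^2 / (1+|x|^2+|y|^2)^{(2(1-t)+a)/2} ≤ C |x - y|^2 / (1+|x|^2+|y|^2)^{a/2}. -/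
open Real

lemma aux_scalar {γ A B : ℝ} (hγ0 : 0 ≤ γ) (hγ1 : γ ≤ 1) (hA : 1 ≤ A) (hAB : A ≤ B) :
    A ^ (-γ) - B ^ (-γ) ≤ γ * A ^ (-γ - 1) * (B - A) := by
  have hA0 : 0 < A := lt_of_lt_of_le one_pos hA
  have hB0 : 0 < B := hA0.trans_le hAB
  have hAγ : 0 < A ^ γ := Real.rpow_pos_of_pos hA0 γ
  have hBγ : 0 < B ^ γ := Real.rpow_pos_of_pos hB0 γ
  have hle : A ^ γ ≤ B ^ γ := Real.rpow_le_rpow hA0.le hAB hγ0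
  have hbern : (B / A) ^ γ ≤ 1 + γ * (B / A - 1) := by
    have h1 : (-1 : ℝ) ≤ B / A - 1 := by
      have := div_pos hB0 hA0; linarith
    have := rpow_one_add_le_one_add_mul_self h1 hγ0 hγ1
    simpa using this
  rw [Real.div_rpow hB0.le hA0.le] at hbern
  have hbern' : (B ^ γ - A ^ γ) * A ≤ γ * (B - A) * A ^ γ := by
    rw [div_le_iff₀' hAγ] at hbern
    have h2 : B ^ γ * A ≤ (A ^ γ * (1 + γ * (B / A - 1))) * A :=
      mul_le_mul_of_nonneg_right hbern hA0.le
    have h3 : (A ^ γ * (1 + γ * (B / A - 1))) * A = A ^ γ * A + γ * (B - A) * A ^ γ := by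
      field_simp
    nlinarith [h2, h3]
  have hrw1 : A ^ (-γ) = (A ^ γ)⁻¹ := Real.rpow_neg hA0.le γ
  have hrw2 : B ^ (-γ) = (B ^ γ)⁻¹ := Real.rpow_neg hB0.le γ
  have hrw3 : A ^ (-γ - 1) = (A ^ γ * A)⁻¹ := by
    rw [show -γ - 1 = -(γ + 1) by ring, Real.rpow_neg hA0.le,
      Real.rpow_add hA0, Real.rpow_one]
  rw [hrw1, hrw2, hrw3, inv_sub_inv (ne_of_gt hAγ) (ne_of_gt hBγ)]
  rw [div_le_iff₀ (by positivity)]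
  have key : (B ^ γ - A ^ γ) * A * A ^ γ ≤ γ * (B - A) * A ^ γ * A ^ γ :=
    mul_le_mul_of_nonneg_right hbern' hAγ.le
  have key2 : γ * (B - A) * A ^ γ * A ^ γ ≤ γ * (B - A) * A ^ γ * B ^ γ := by
    have : 0 ≤ γ * (B - A) * A ^ γ := by
      have : 0 ≤ B - A := sub_nonneg.2 hAB
      positivity
    exact mul_le_mul_of_nonneg_left hle this
  have hfin : (B ^ γ - A ^ γ) * A * A ^ γ ≤ γ * (B - A) * A ^ γ * B ^ γ := key.trans key2
  calc B ^ γ - A ^ γ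
      = ((B ^ γ - A ^ γ) * A * A ^ γ) * (A * A ^ γ)⁻¹ := by
        field_simp
    _ ≤ (γ * (B - A) * A ^ γ * B ^ γ) * (A * A ^ γ)⁻¹ := by
        apply mul_le_mul_of_nonneg_right hfin; positivity
    _ = γ * (A ^ γ * A)⁻¹ * (B - A) * (A ^ γ * B ^ γ) * (A * A ^ γ)⁻¹ * (A * A ^ γ) := by
        field_simp
    _ = γ * (A ^ γ * A)⁻¹ * (B - A) * (A ^ γ * B ^ γ) := by
        field_simp


lemma aux_mono {β r s : ℝ} (hβ0 : 0 ≤ β) (hβ : β ≤ 1/2) (hr : 0 ≤ r) (hrs : r ≤ s) :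
    r * ((1 + r^2) ^ (-β)) ≤ s * ((1 + s^2) ^ (-β)) := by
  rcases eq_or_lt_of_le hr with h0 | hr0
  · have : r = 0 := h0.symm
    subst this
    simpa using mul_nonneg hrs (Real.rpow_nonneg (by positivity) (-β))
  have hs0 : 0 < s := hr0.trans_le hrs
  have idr : ∀ u : ℝ, 0 < u → u * ((1 + u^2) ^ (-β)) = u ^ (1 - 2*β) * (u^2 / (1 + u^2)) ^ β := by
    intro u hu
    rw [Real.div_rpow (by positivity) (by positivity), ← Real.rpow_natCast u 2,
      ← Real.rpow_mul hu.le, div_eq_mul_inv, ← mul_assoc, ← Real.rpow_add hu,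
      ← Real.rpow_neg (by positivity)]
    norm_num
  rw [idr r hr0, idr s hs0]
  have f1 : r ^ (1 - 2*β) ≤ s ^ (1 - 2*β) := Real.rpow_le_rpow hr hrs (by linarith)
  have f2 : (r^2 / (1 + r^2)) ^ β ≤ (s^2 / (1 + s^2)) ^ β := by
    apply Real.rpow_le_rpow (by positivity) _ hβ0
    rw [div_le_div_iff₀ (by positivity) (by positivity)]
    nlinarith
  exact mul_le_mul f1 f2 (by positivity) (by positivity)

set_option maxHeartbeats 1000000 in
lemma aux_key {E : Type*} [NormedAddCommGroup E] [NormedSpace ℝ E] {β : ℝ}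
    (hβ0 : 0 < β) (hβ : β < 1/2) (x y : E) (h : ‖y‖ ≤ ‖x‖) :
    ‖((1 + ‖x‖^2) ^ (-β)) • x - ((1 + ‖y‖^2) ^ (-β)) • y‖ ≤
      9 * ((1 + ‖x‖^2) ^ (-β)) * ‖x - y‖ := by
  set X := ‖x‖ with hX
  set Y := ‖y‖ with hY
  set d := ‖x - y‖ with hd
  have hX0 : 0 ≤ X := norm_nonneg x
  have hY0 : 0 ≤ Y := norm_nonneg y
  have hd0 : 0 ≤ d := norm_nonneg _
  set P := (1 + X^2) ^ (-β) with hP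
  set Q := (1 + Y^2) ^ (-β) with hQ
  have hP0 : 0 < P := Real.rpow_pos_of_pos (by positivity) _
  have hQ0 : 0 < Q := Real.rpow_pos_of_pos (by positivity) _
  have hnx : ‖P • x‖ = P * X := by rw [norm_smul, Real.norm_eq_abs, abs_of_pos hP0]
  have hny : ‖Q • y‖ = Q * Y := by rw [norm_smul, Real.norm_eq_abs, abs_of_pos hQ0]
  rcases le_or_gt X (2 * d) with hcase | hcase
  · -- crude case
    have hmono : Y * Q ≤ X * P := aux_mono hβ0.le hβ.le hY0 h
    calc ‖P • x - Q • y‖ ≤ ‖P • x‖ + ‖Q • y‖ := norm_sub_le _ _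
      _ = P * X + Q * Y := by rw [hnx, hny]
      _ ≤ P * X + P * X := by nlinarith
      _ ≤ P * (2 * d) + P * (2 * d) := by
          have := mul_le_mul_of_nonneg_left hcase hP0.le
          linarith
      _ ≤ 9 * P * d := by nlinarith [mul_nonneg hP0.le hd0]
  · -- near case
    have hYX : X / 2 ≤ Y := by
      have h1 : X - Y ≤ d := by rw [hX, hY, hd]; exact norm_sub_norm_le x y
      linarith
    have hsub : P • x - Q • y = P • (x - y) + (P - Q) • y := by
      rw [smul_sub, sub_smul]; abel
    have hY2X2 : Y^2 ≤ X^2 := by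
      have := mul_le_mul h h hY0 hX0
      nlinarith [this]
    have hPQ : P ≤ Q := by
      apply Real.rpow_le_rpow_of_nonpos (by positivity)
        (by linarith [hY2X2]) (by linarith)
    have hS : Q - P ≤ β * ((1 + Y^2) ^ (-β - 1)) * (X^2 - Y^2) := by
      have := aux_scalar hβ0.le (by linarith) (A := 1 + Y^2) (B := 1 + X^2)
        (by nlinarith [sq_nonneg Y]) (by linarith [hY2X2])
      calc Q - P ≤ β * ((1 + Y^2) ^ (-β - 1)) * ((1 + X^2) - (1 + Y^2)) := this
        _ = β * ((1 + Y^2) ^ (-β - 1)) * (X^2 - Y^2) := by ring_nf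
    set R := (1 + Y^2) ^ (-β - 1) with hR
    set S := (1 + X^2) ^ (-β - 1) with hSS
    have hR0 : 0 ≤ R := Real.rpow_nonneg (by positivity) _
    have hS0 : 0 ≤ S := Real.rpow_nonneg (by positivity) _
    have hRS : R ≤ 8 * S := by
      have h1 : (1 + X^2) / 4 ≤ 1 + Y^2 := by
        have q : (X/2) * (X/2) ≤ Y * Y := mul_le_mul hYX hYX (by positivity) hY0
        nlinarith [q]
      have h2 : R ≤ ((1 + X^2) / 4) ^ (-β - 1) :=
        Real.rpow_le_rpow_of_nonpos (by positivity) h1 (by linarith)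
      have h3 : ((1 + X^2) / 4) ^ (-β - 1) = S * (4:ℝ) ^ (β + 1) := by
        rw [Real.div_rpow (by positivity) (by norm_num), hSS,
          show -β - 1 = -(β+1) by ring, Real.rpow_neg (by norm_num : (0:ℝ) ≤ 4)]
        field_simp [ne_of_gt (Real.rpow_pos_of_pos (by norm_num : (0:ℝ) < 4) (β+1))]
      have h4 : (4:ℝ) ^ (β + 1) ≤ 8 := by
        have h5 : (4:ℝ) ^ (β + 1) ≤ (4:ℝ) ^ (3/2 : ℝ) :=
          Real.rpow_le_rpow_of_exponent_le (by norm_num) (by linarith)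
        have h6 : (4:ℝ) ^ (3/2 : ℝ) = 8 := by
          rw [show (4:ℝ) = 2^(2:ℕ) by norm_num, ← Real.rpow_natCast 2 2,
            ← Real.rpow_mul (by norm_num)]
          norm_num
        linarith
      calc R ≤ S * (4:ℝ) ^ (β + 1) := by rw [← h3]; exact h2
        _ ≤ S * 8 := by nlinarith
        _ = 8 * S := by ring
    have hXY2' : 0 ≤ X^2 - Y^2 := by linarith [hY2X2]
    have hXY2 : X^2 - Y^2 ≤ 2 * X * d := by
      have h1 : X - Y ≤ d := by rw [hX, hY, hd]; exact norm_sub_norm_le x y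
      have h2 : 0 ≤ X - Y := sub_nonneg.2 h
      have h3 : (X + Y) * (X - Y) ≤ (2 * X) * d :=
        mul_le_mul (by linarith) h1 h2 (by positivity)
      calc X^2 - Y^2 = (X + Y) * (X - Y) := by ring
        _ ≤ (2 * X) * d := h3
        _ = 2 * X * d := by ring
    have hSP : S * (1 + X^2) = P := by
      rw [hSS, hP, ← Real.rpow_add_one (by positivity : (1 + X^2) ≠ 0)]
      norm_num
    have h2 : (Q - P) * Y ≤ 8 * P * d := by
      calc (Q - P) * Y ≤ (β * R * (X^2 - Y^2)) * Y :=
            mul_le_mul_of_nonneg_right hS hY0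
        _ ≤ (β * (8 * S) * (2 * X * d)) * X := by
            have hc1 : 0 ≤ β * (8 * S) := by nlinarith
            have hc2 : 0 ≤ 2 * X * d := by positivity
            apply mul_le_mul _ h hY0 (mul_nonneg hc1 hc2)
            apply mul_le_mul _ hXY2 hXY2' hc1
            nlinarith [mul_le_mul_of_nonneg_left hRS hβ0.le]
        _ = 16 * β * (S * X^2) * d := by ring
        _ ≤ 16 * β * (S * (1 + X^2)) * d := by
            have h7 : S * X^2 ≤ S * (1 + X^2) := by nlinarith
            have h8 : 0 ≤ 16 * β * d ∧ (0:ℝ) ≤ 1 := ⟨by positivity, zero_le_one⟩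
            nlinarith [mul_le_mul_of_nonneg_left h7 (mul_nonneg (by linarith : (0:ℝ) ≤ 16*β) hd0)]
        _ = 16 * β * P * d := by rw [hSP]
        _ ≤ 8 * P * d := by nlinarith [mul_nonneg hP0.le hd0]
    calc ‖P • x - Q • y‖ = ‖P • (x - y) + (P - Q) • y‖ := by rw [hsub]
      _ ≤ ‖P • (x - y)‖ + ‖(P - Q) • y‖ := norm_add_le _ _
      _ = P * d + |P - Q| * Y := by
          rw [norm_smul, norm_smul, Real.norm_eq_abs, Real.norm_eq_abs, abs_of_pos hP0]
      _ = P * d + (Q - P) * Y := by rw [abs_of_nonpos (by linarith), neg_sub]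
      _ ≤ P * d + 8 * P * d := by linarith [h2]
      _ = 9 * P * d := by ring

set_option maxHeartbeats 1000000 in
/-- Property (V4): for `1 < t < 2` and `a > 1` there is `C > 0` such that
`|V_t x − V_t y|² / (1+|x|²+|y|²)^((2(1−t)+a)/2) ≤ C |x−y|² / (1+|x|²+|y|²)^(a/2)`. -/
theorem vpotential_weighted_bound {n : ℕ} {t a : ℝ} (ht1 : 1 < t) (ht2 : t < 2)
    (ha : 1 < a) :
    ∃ C : ℝ, 0 < C ∧ ∀ x y : EuclideanSpace ℝ (Fin n),
      ‖(((1 : ℝ) + ‖x‖ ^ 2) ^ ((1 - t) / 2)) • x -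
          (((1 : ℝ) + ‖y‖ ^ 2) ^ ((1 - t) / 2)) • y‖ ^ 2 /
        (((1 : ℝ) + ‖x‖ ^ 2 + ‖y‖ ^ 2) ^ ((2 * (1 - t) + a) / 2)) ≤
      C * (‖x - y‖ ^ 2 / (((1 : ℝ) + ‖x‖ ^ 2 + ‖y‖ ^ 2) ^ (a / 2))) := by
  set β : ℝ := (t - 1) / 2 with hβ
  have hβ0 : 0 < β := by rw [hβ]; linarith
  have hβhalf : β < 1/2 := by rw [hβ]; linarith
  have hexp : (1 - t) / 2 = -β := by rw [hβ]; ring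
  refine ⟨81 * 2 ^ (t - 1), by positivity, fun x y => ?_⟩
  set D : ℝ := 1 + ‖x‖ ^ 2 + ‖y‖ ^ 2 with hD
  have hD0 : 0 < D := by positivity
  set N : ℝ := ‖(((1 : ℝ) + ‖x‖ ^ 2) ^ ((1 - t) / 2)) • x -
      (((1 : ℝ) + ‖y‖ ^ 2) ^ ((1 - t) / 2)) • y‖ ^ 2 with hN
  set d : ℝ := ‖x - y‖ with hd
  have hd0 : 0 ≤ d := norm_nonneg _
  -- the key quadratic bound
  have hsq : N ≤ 81 * 2 ^ (t - 1) * (d ^ 2 * D ^ (1 - t)) := by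
    -- bound with the larger of the two norms
    have sqstep : ∀ Z : ℝ, 0 ≤ Z → D ≤ 2 * (1 + Z ^ 2) →
        ∀ v : ℝ, 0 ≤ v → v ≤ 9 * ((1 + Z ^ 2) ^ (-β)) * d →
        v ^ 2 ≤ 81 * 2 ^ (t - 1) * (d ^ 2 * D ^ (1 - t)) := by
      intro Z hZ hDZ v hv hvle
      have hZ2 : (0:ℝ) < 1 + Z ^ 2 := by positivity
      have hW0 : 0 < (1 + Z ^ 2) ^ (-β) := Real.rpow_pos_of_pos hZ2 _
      have h1 : v ^ 2 ≤ (9 * ((1 + Z ^ 2) ^ (-β)) * d) ^ 2 := by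
        apply pow_le_pow_left₀ hv hvle
      have hWsq : ((1 + Z ^ 2) ^ (-β)) ^ 2 = (1 + Z ^ 2) ^ (1 - t) := by
        rw [← Real.rpow_natCast ((1 + Z ^ 2) ^ (-β)) 2, ← Real.rpow_mul hZ2.le]
        norm_num
        rw [hβ]; ring_nf
      have h2 : (1 + Z ^ 2) ^ (1 - t) ≤ 2 ^ (t - 1) * D ^ (1 - t) := by
        have h3 : D / 2 ≤ 1 + Z ^ 2 := by linarith
        have h4 : (1 + Z ^ 2) ^ (1 - t) ≤ (D / 2) ^ (1 - t) :=
          Real.rpow_le_rpow_of_nonpos (by positivity) h3 (by linarith)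
        have h5 : (D / 2) ^ (1 - t) = D ^ (1 - t) * 2 ^ (t - 1) := by
          rw [Real.div_rpow hD0.le (by norm_num), show (t - 1 : ℝ) = -(1 - t) by ring,
            Real.rpow_neg (by norm_num : (0:ℝ) ≤ 2), div_eq_mul_inv]
        rw [h5] at h4; linarith
      calc v ^ 2 ≤ (9 * ((1 + Z ^ 2) ^ (-β)) * d) ^ 2 := h1
        _ = 81 * ((1 + Z ^ 2) ^ (-β)) ^ 2 * d ^ 2 := by ring
        _ = 81 * (1 + Z ^ 2) ^ (1 - t) * d ^ 2 := by rw [hWsq]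
        _ ≤ 81 * (2 ^ (t - 1) * D ^ (1 - t)) * d ^ 2 := by
            have hd2 : (0:ℝ) ≤ d ^ 2 := by positivity
            nlinarith [h2, hd2]
        _ = 81 * 2 ^ (t - 1) * (d ^ 2 * D ^ (1 - t)) := by ring
    rcases le_total ‖y‖ ‖x‖ with hc | hc
    · refine sqstep ‖x‖ (norm_nonneg x) (by rw [hD]; nlinarith [sq_nonneg ‖y‖, sq_nonneg ‖x‖, pow_le_pow_left₀ (norm_nonneg y) hc 2]) _ (by positivity) ?_
      rw [hexp]
      exact aux_key hβ0 hβhalf x y hc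
    · have hk := aux_key hβ0 hβhalf y x hc
      have hdsymm : ‖y - x‖ = d := by rw [hd]; exact norm_sub_rev y x
      refine sqstep ‖y‖ (norm_nonneg y) (by rw [hD]; nlinarith [pow_le_pow_left₀ (norm_nonneg x) hc 2]) _ (by positivity) ?_
      rw [hexp, norm_sub_rev]
      rw [hdsymm] at hk
      exact hk
  -- final algebra
  have hsplit : D ^ ((2 * (1 - t) + a) / 2) = D ^ (1 - t) * D ^ (a / 2) := by
    rw [show (2 * (1 - t) + a) / 2 = (1 - t) + a / 2 by ring, Real.rpow_add hD0]
  rw [hsplit, ← mul_div_assoc, div_le_div_iff₀ (by positivity) (by positivity)]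
  have hN0 : 0 ≤ N := by rw [hN]; positivity
  calc N * D ^ (a / 2) ≤ (81 * 2 ^ (t - 1) * (d ^ 2 * D ^ (1 - t))) * D ^ (a / 2) := by
        apply mul_le_mul_of_nonneg_right hsq (by positivity)
    _ = 81 * 2 ^ (t - 1) * d ^ 2 * (D ^ (1 - t) * D ^ (a / 2)) := by ring
end

section
/- Let f : ℝ^d → ℝ be C^2, convex, and a-elliptic with a = 1, i.e., there exists c_1 > 0 with ⟨∇²f(N)M, M⟩ ≥ c_1 |M|^2 / (1+|N|^2)^{1/2} for all M, N. If d = 1, then f is not of linear growth: there is no C > 0 with |f(z)| ≤ C(1+|z|) for all z. -/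
/-- A `C²` convex function on `ℝ` that is `1`-elliptic (i.e. `f''(N) M² ≥ c₁ M²/(1+N²)^(1/2)`)
cannot be of linear growth. -/
theorem one_elliptic_not_linear_growth (f : ℝ → ℝ) (hf : ContDiff ℝ 2 f)
    (hconv : ConvexOn ℝ Set.univ f) (c₁ : ℝ) (hc₁ : 0 < c₁)
    (hell : ∀ N M : ℝ, c₁ * M ^ 2 / (((1 : ℝ) + N ^ 2) ^ ((1 : ℝ) / 2)) ≤
      deriv (deriv f) N * M ^ 2) :
    ¬ ∃ C : ℝ, 0 < C ∧ ∀ z : ℝ, |f z| ≤ C * (1 + |z|) := by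
  rintro ⟨C, hC, hlin⟩
  have hf' : ContDiff ℝ ((1:ℕ)+1) f := by exact_mod_cast hf
  have hd : Differentiable ℝ f := hf.differentiable (by norm_num)
  have hg1 : ContDiff ℝ 1 (deriv f) := (contDiff_succ_iff_deriv.mp hf').2.2
  have hgd : Differentiable ℝ (deriv f) := hg1.differentiable (by norm_num)
  have hg'c : Continuous (deriv (deriv f)) := hg1.continuous_deriv le_rfl
  have hell1 : ∀ N : ℝ, c₁ / (((1:ℝ) + N ^ 2) ^ ((1:ℝ)/2)) ≤ deriv (deriv f) N := by
    intro N; have h := hell N 1; simpa using h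
  have hXpos : ∀ N : ℝ, (0:ℝ) < ((1:ℝ) + N ^ 2) ^ ((1:ℝ)/2) := fun N =>
    Real.rpow_pos_of_pos (by positivity) _
  have hpos : ∀ N : ℝ, 0 < deriv (deriv f) N := fun N =>
    lt_of_lt_of_le (div_pos hc₁ (hXpos N)) (hell1 N)
  -- lower bound f'' ≥ c₁/(1+t) for t ≥ 0
  have hlow : ∀ t : ℝ, 0 ≤ t → c₁ / (1 + t) ≤ deriv (deriv f) t := by
    intro t ht
    refine le_trans ?_ (hell1 t)
    have hX : ((1:ℝ) + t ^ 2) ^ ((1:ℝ)/2) ≤ 1 + t := by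
      rw [← Real.sqrt_eq_rpow]
      calc Real.sqrt (1 + t ^ 2) ≤ Real.sqrt ((1 + t) ^ 2) :=
            Real.sqrt_le_sqrt (by nlinarith)
        _ = 1 + t := Real.sqrt_sq (by linarith)
    exact div_le_div_of_nonneg_left hc₁.le (hXpos t) hX
  -- FTC: f' b ≥ f' 1 + c₁ (log(1+b) - log 2)
  have key : ∀ b : ℝ, 1 ≤ b →
      deriv f 1 + c₁ * (Real.log (1 + b) - Real.log 2) ≤ deriv f b := by
    intro b hb
    have hint2 : IntervalIntegrable (deriv (deriv f)) MeasureTheory.volume 1 b :=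
      hg'c.intervalIntegrable 1 b
    have h1 : ∫ t in (1:ℝ)..b, deriv (deriv f) t = deriv f b - deriv f 1 :=
      intervalIntegral.integral_deriv_eq_sub (fun x _ => hgd.differentiableAt) hint2
    have hcont : ContinuousOn (fun t : ℝ => c₁ / (1 + t)) (Set.uIcc 1 b) := by
      apply ContinuousOn.div continuousOn_const (by fun_prop)
      intro x hx
      have : (0:ℝ) < 1 + x := by
        rcases Set.mem_uIcc.mp hx with h | h <;> linarith [h.1]
      exact this.ne'
    have hint1 : IntervalIntegrable (fun t : ℝ => c₁ / (1 + t)) MeasureTheory.volume 1 b :=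
      hcont.intervalIntegrable
    have h2 : ∫ t in (1:ℝ)..b, c₁ / (1 + t)
        = c₁ * Real.log (1 + b) - c₁ * Real.log 2 := by
      have hder : ∀ t ∈ Set.uIcc (1:ℝ) b,
          HasDerivAt (fun s => c₁ * Real.log (1 + s)) (c₁ / (1 + t)) t := by
        intro t ht
        have h1t : (0:ℝ) < 1 + t := by
          rcases Set.mem_uIcc.mp ht with h | h <;> · have := h.1; linarith
        have hid : HasDerivAt (fun s : ℝ => 1 + s) 1 t := (hasDerivAt_id t).const_add 1
        have := (hid.log (ne_of_gt h1t)).const_mul c₁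
        simpa [mul_one_div, div_eq_mul_inv] using this
      rw [intervalIntegral.integral_eq_sub_of_hasDerivAt hder hint1]
      norm_num
    have hmono : ∫ t in (1:ℝ)..b, c₁ / (1 + t) ≤ ∫ t in (1:ℝ)..b, deriv (deriv f) t :=
      intervalIntegral.integral_mono_on hb hint1 hint2
        (fun t ht => hlow t (by linarith [ht.1]))
    rw [h1, h2] at hmono
    linarith
  -- linear growth bounds f' by 5C on [1,∞)
  have hub : ∀ x : ℝ, 1 ≤ x → deriv f x ≤ 5 * C := by
    intro x hx
    have hx0 : (0:ℝ) < x := by linarith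
    obtain ⟨ξ, hξ, hξeq⟩ := exists_deriv_eq_slope f (by linarith : x < 2 * x)
      hd.continuous.continuousOn hd.differentiableOn
    have hmonog : StrictMono (deriv f) := strictMono_of_deriv_pos hpos
    have hle : deriv f x ≤ deriv f ξ := hmonog.monotone hξ.1.le
    rw [hξeq] at hle
    have hfx := abs_le.mp (hlin x)
    have hf2x := abs_le.mp (hlin (2 * x))
    rw [abs_of_nonneg hx0.le] at hfx
    rw [abs_of_nonneg (by linarith)] at hf2x
    have hnum : f (2 * x) - f x ≤ 5 * C * x := by nlinarith
    have : (f (2 * x) - f x) / (2 * x - x) ≤ 5 * C := by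
      rw [div_le_iff₀ (by linarith)]
      nlinarith
    linarith
  -- contradiction with a large b
  set b : ℝ := max 1 (Real.exp ((5 * C - deriv f 1) / c₁ + Real.log 2)) with hbdef
  have hb1 : 1 ≤ b := le_max_left _ _
  have hbe : Real.exp ((5 * C - deriv f 1) / c₁ + Real.log 2) ≤ b := le_max_right _ _
  have hlogb : (5 * C - deriv f 1) / c₁ + Real.log 2 ≤ Real.log b := by
    rw [← Real.log_exp ((5 * C - deriv f 1) / c₁ + Real.log 2)]
    exact Real.log_le_log (Real.exp_pos _) hbe
  have hlog1b : Real.log b < Real.log (1 + b) :=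
    Real.log_lt_log (by linarith) (by linarith)
  have h1 := key b hb1
  have h2 := hub b hb1
  have : (5 * C - deriv f 1) / c₁ < Real.log (1 + b) - Real.log 2 := by linarith
  have : 5 * C - deriv f 1 < c₁ * (Real.log (1 + b) - Real.log 2) := by
    rw [div_lt_iff₀ hc₁] at this; linarith [this]
  linarith
end

section
/- Let μ, μ_1, μ_2, ... be W-valued finite Radon measures on an open set Ω ⊂ ℝ^n taking values in a closed convex cone C ⊂ W, and let g : C → [0, ∞] be lower semicontinuous, convex, and positively 1-homogeneous. If μ_k converges weakly-* to μ, then ∫_Ω g(dμ/d|μ|) d|μ| ≤ liminf_{k→∞} ∫_Ω g(dμ_k/d|μ_k|) d|μ_k|. -/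
open MeasureTheory Filter ENNReal

open Set



lemma aux_ofReal_max_zero (a : ℝ) : ENNReal.ofReal (max a 0) = ENNReal.ofReal a := by
  rcases le_total a 0 with h | h
  · rw [max_eq_right h, ENNReal.ofReal_zero, eq_comm, ENNReal.ofReal_eq_zero]; exact h
  · rw [max_eq_left h]

lemma aux_ofReal_integral_le {α : Type*} [MeasurableSpace α] {μ : Measure α} {h : α → ℝ}
    (hi : Integrable h μ) : ENNReal.ofReal (∫ x, h x ∂μ) ≤ ∫⁻ x, ENNReal.ofReal (h x) ∂μ := by
  calc ENNReal.ofReal (∫ x, h x ∂μ) ≤ ENNReal.ofReal (∫ x, max (h x) 0 ∂μ) := by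
        apply ENNReal.ofReal_le_ofReal
        exact integral_mono hi hi.pos_part (fun x => le_max_left _ _)
    _ = ∫⁻ x, ENNReal.ofReal (max (h x) 0) ∂μ :=
        ofReal_integral_eq_lintegral_ofReal hi.pos_part
          (Eventually.of_forall fun x => le_max_right _ _)
    _ = ∫⁻ x, ENNReal.ofReal (h x) ∂μ := by
        simp only [aux_ofReal_max_zero]

lemma aux_disjoint_opens {X : Type*} [TopologicalSpace X] [T2Space X] (N : ℕ) (K : ℕ → Set X)
    (hK : ∀ m, IsCompact (K m)) (hd : ∀ m l, m ≠ l → Disjoint (K m) (K l)) :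
    ∃ U : ℕ → Set X, (∀ m, IsOpen (U m)) ∧ (∀ m, K m ⊆ U m) ∧
      (∀ m l, m < N → l < N → m ≠ l → Disjoint (U m) (U l)) := by
  have h : ∀ m l : ℕ, ∃ A B : Set X, IsOpen A ∧ IsOpen B ∧ K m ⊆ A ∧ K l ⊆ B ∧
      (m ≠ l → Disjoint A B) := by
    intro m l
    by_cases hml : m = l
    · exact ⟨univ, univ, isOpen_univ, isOpen_univ, subset_univ _, subset_univ _,
        fun h => absurd hml h⟩
    · obtain ⟨A, B, hA, hB, hKA, hKB, hAB⟩ :=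
        SeparatedNhds.of_isCompact_isCompact (hK m) (hK l) (hd m l hml)
      exact ⟨A, B, hA, hB, hKA, hKB, fun _ => hAB⟩
  choose A B hA hB hKA hKB hAB using h
  set P : ℕ → ℕ → Set X := fun m l => if m ≤ l then A m l else B l m with hP
  have hPopen : ∀ m l, IsOpen (P m l) := by
    intro m l; simp only [hP]; split_ifs; exacts [hA m l, hB l m]
  have hKP : ∀ m l, K m ⊆ P m l := by
    intro m l; simp only [hP]; split_ifs; exacts [hKA m l, hKB l m]
  refine ⟨fun m => ⋂ l ∈ Finset.range N, P m l, ?_, ?_, ?_⟩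
  · exact fun m => isOpen_biInter_finset (fun l _ => hPopen m l)
  · exact fun m => subset_iInter₂ fun l _ => hKP m l
  · have key : ∀ m l, m < N → l < N → m < l →
        Disjoint (⋂ l' ∈ Finset.range N, P m l') (⋂ l' ∈ Finset.range N, P l l') := by
      intro m l hm hl hml
      have h1 : (⋂ l' ∈ Finset.range N, P m l') ⊆ A m l := by
        refine (biInter_subset_of_mem (Finset.mem_range.2 hl)).trans ?_
        simp only [hP, if_pos hml.le]
        exact subset_rfl
      have h2 : (⋂ l' ∈ Finset.range N, P l l') ⊆ B m l := by
        refine (biInter_subset_of_mem (Finset.mem_range.2 hm)).trans ?_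
        simp only [hP, if_neg (not_le.2 hml)]
        exact subset_rfl
      exact (hAB m l hml.ne).mono h1 h2
    intro m l hm hl hml
    rcases hml.lt_or_gt with h | h
    · exact key m l hm hl h
    · exact (key l m hl hm h).symm

lemma aux_countable_sup {d : ℕ} (K : Set (Fin d → ℝ)) (h0 : (0 : Fin d → ℝ) ∈ K) :
    ∃ e : ℕ → (Fin d → ℝ), e 0 = 0 ∧ (∀ m, e m ∈ K) ∧ ∀ x : Fin d → ℝ,
      (⨆ w ∈ K, ENNReal.ofReal (∑ i, w i * x i)) = ⨆ m, ENNReal.ofReal (∑ i, e m i * x i) := by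
  have hopen : ∀ (q : ℚ) (w : K), IsOpen {x : Fin d → ℝ | (q : ℝ) < ∑ i, (w : Fin d → ℝ) i * x i} := by
    intro q w
    exact isOpen_lt continuous_const (continuous_finset_sum _ fun i _ =>
      (continuous_const.mul (continuous_apply i)))
  have hTq : ∀ q : ℚ, ∃ T : Set K, T.Countable ∧
      (⋃ w ∈ T, {x : Fin d → ℝ | (q : ℝ) < ∑ i, (w : Fin d → ℝ) i * x i}) =
      ⋃ w : K, {x : Fin d → ℝ | (q : ℝ) < ∑ i, (w : Fin d → ℝ) i * x i} := by
    intro q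
    exact TopologicalSpace.isOpen_iUnion_countable _ (hopen q)
  choose T hTc hTeq using hTq
  set D : Set (Fin d → ℝ) := {0} ∪ ⋃ q : ℚ, ((↑) '' (T q)) with hD
  have hDc : D.Countable :=
    (countable_singleton 0).union (countable_iUnion fun q => ((hTc q).image _))
  have hDK : D ⊆ K := by
    rintro w (rfl | hw)
    · exact h0
    · obtain ⟨q, hq⟩ := mem_iUnion.1 hw
      obtain ⟨w', _, rfl⟩ := hq
      exact w'.2
  obtain ⟨e₀, he₀⟩ := hDc.exists_eq_range ⟨0, Or.inl rfl⟩
  refine ⟨fun m => Nat.casesOn m 0 e₀, rfl, ?_, ?_⟩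
  · intro m
    cases m with
    | zero => exact h0
    | succ m => exact hDK (he₀ ▸ mem_range_self m)
  · intro x
    apply le_antisymm
    · refine iSup₂_le fun w hw => ?_
      rcases le_or_gt (∑ i, w i * x i) 0 with hle | hlt
      · rw [ENNReal.ofReal_eq_zero.2 hle]; exact zero_le
      · by_contra hcon
        push_neg at hcon
        obtain ⟨q, hq0, h1, h2⟩ := ENNReal.lt_iff_exists_rat_btwn.1 hcon
        have hq : ((q : ℝ).toNNReal : ℝ≥0∞) = ENNReal.ofReal (q : ℝ) := rfl
        rw [hq] at h1 h2
        have hqx : (q : ℝ) < ∑ i, w i * x i :=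
          (ENNReal.ofReal_lt_ofReal_iff hlt).1 h2
        have hxU : x ∈ ⋃ w : K, {x : Fin d → ℝ | (q : ℝ) < ∑ i, (w : Fin d → ℝ) i * x i} :=
          mem_iUnion.2 ⟨⟨w, hw⟩, hqx⟩
        rw [← hTeq q] at hxU
        obtain ⟨w', hw'T, hw'x⟩ := mem_iUnion₂.1 hxU
        have hw'D : (w' : Fin d → ℝ) ∈ D := Or.inr (mem_iUnion.2 ⟨q, mem_image_of_mem _ hw'T⟩)
        rw [he₀] at hw'D
        obtain ⟨m, hm⟩ := hw'D
        have : ENNReal.ofReal (q:ℝ) ≤ ⨆ m, ENNReal.ofReal (∑ i, (Nat.casesOn m 0 e₀ : Fin d → ℝ) i * x i) := by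
          refine le_trans (ENNReal.ofReal_le_ofReal hw'x.le) ?_
          refine le_trans (le_of_eq ?_) (le_iSup _ (m+1))
          rw [← hm]
        exact absurd (lt_of_le_of_lt this h1) (lt_irrefl _)
    · refine iSup_le fun m => ?_
      cases m with
      | zero => exact le_iSup₂_of_le 0 h0 le_rfl
      | succ m => exact le_iSup₂_of_le (e₀ m) (hDK (he₀ ▸ mem_range_self m)) le_rfl

lemma aux_dual_repr {d : ℕ} {C : Set (Fin d → ℝ)} (hCclosed : IsClosed C) (hCconv : Convex ℝ C)
    (hCcone : ∀ r : ℝ, 0 ≤ r → ∀ x ∈ C, r • x ∈ C)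
    {g : (Fin d → ℝ) → ℝ≥0∞} (hglsc : LowerSemicontinuous g)
    (hgconv : ∀ x ∈ C, ∀ y ∈ C, ∀ a b : ℝ, 0 ≤ a → 0 ≤ b → a + b = 1 →
      g (a • x + b • y) ≤ ENNReal.ofReal a * g x + ENNReal.ofReal b * g y)
    (hghom : ∀ r : ℝ, 0 < r → ∀ x ∈ C, g (r • x) = ENNReal.ofReal r * g x)
    {x : Fin d → ℝ} (hx : x ∈ C) (hx0 : x ≠ 0) :
    g x ≤ ⨆ w ∈ {w : Fin d → ℝ | ∀ y ∈ C, ENNReal.ofReal (∑ i, w i * y i) ≤ g y},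
      ENNReal.ofReal (∑ i, w i * x i) := by
  set K : Set (Fin d → ℝ) := {w | ∀ y ∈ C, ENNReal.ofReal (∑ i, w i * y i) ≤ g y} with hKdef
  -- main step : for every real r ≥ 0 with ofReal r < g x there is w ∈ K with r < ∑ w i * x i
  have main : ∀ r : ℝ, 0 ≤ r → ENNReal.ofReal r < g x → ∃ w ∈ K, r < ∑ i, w i * x i := by
    intro r hr0 hrg
    by_cases hfin : ∃ y₀ ∈ C, g y₀ ≠ ⊤
    · obtain ⟨y₀, hy₀C, hy₀⟩ := hfin
      have hC0 : (0 : Fin d → ℝ) ∈ C := by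
        have := hCcone 0 le_rfl y₀ hy₀C; rwa [zero_smul] at this
      -- g 0 = 0
      have hg0 : g 0 = 0 := by
        by_contra hne
        obtain ⟨t, ht0, htg⟩ := exists_between (pos_iff_ne_zero.2 hne)
        have hseq : Tendsto (fun j : ℕ => (1 / (j + 1) : ℝ) • y₀) atTop (nhds 0) := by
          have h1 : Tendsto (fun j : ℕ => (1 / (j + 1) : ℝ)) atTop (nhds 0) :=
            tendsto_one_div_add_atTop_nhds_zero_nat
          have := h1.smul_const y₀
          rwa [zero_smul] at this
        have hgv : ∀ j : ℕ, g ((1 / (j + 1) : ℝ) • y₀) = ENNReal.ofReal (1 / (j + 1)) * g y₀ :=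
          fun j => hghom _ (by positivity) _ hy₀C
        have h2 : Tendsto (fun j : ℕ => ENNReal.ofReal (1 / (j + 1) : ℝ) * g y₀) atTop (nhds 0) := by
          have h3 : Tendsto (fun j : ℕ => ENNReal.ofReal (1 / (j + 1) : ℝ)) atTop (nhds 0) := by
            have h1 : Tendsto (fun j : ℕ => (1 / (j + 1) : ℝ)) atTop (nhds 0) :=
              tendsto_one_div_add_atTop_nhds_zero_nat
            have := (ENNReal.continuous_ofReal.tendsto 0).comp h1
            rwa [ENNReal.ofReal_zero] at this
          have := ENNReal.Tendsto.mul_const h3 (Or.inr hy₀)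
          rwa [zero_mul] at this
        have hE1 : ∀ᶠ j : ℕ in atTop, t < g ((1 / (j + 1) : ℝ) • y₀) :=
          hseq.eventually (hglsc 0 t htg)
        have hE2 : ∀ᶠ j : ℕ in atTop, g ((1 / (j + 1) : ℝ) • y₀) < t := by
          filter_upwards [h2.eventually_lt_const ht0] with j hj
          rw [hgv j]; exact hj
        obtain ⟨j, h1, h2⟩ := (hE1.and hE2).exists
        exact absurd (h1.trans h2) (lt_irrefl _)
      -- the epigraph
      set epi : Set ((Fin d → ℝ) × ℝ) :=
        {p | p.1 ∈ C ∧ 0 ≤ p.2 ∧ g p.1 ≤ ENNReal.ofReal p.2} with hepidef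
      have hepi_closed : IsClosed epi := by
        have h1 : IsClosed {p : (Fin d → ℝ) × ℝ | p.1 ∈ C} := hCclosed.preimage continuous_fst
        have h2 : IsClosed {p : (Fin d → ℝ) × ℝ | 0 ≤ p.2} :=
          isClosed_le continuous_const continuous_snd
        have h3 : IsClosed {p : (Fin d → ℝ) × ℝ | g p.1 ≤ ENNReal.ofReal p.2} := by
          rw [← isOpen_compl_iff]
          rw [isOpen_iff_mem_nhds]
          intro p hp
          simp only [mem_compl_iff, mem_setOf_eq, not_le] at hp
          obtain ⟨t, ht1, ht2⟩ := exists_between hp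
          have hE1 : ∀ᶠ y in nhds p.1, t < g y := hglsc p.1 t ht2
          have hE2 : ∀ᶠ s in nhds p.2, ENNReal.ofReal s < t :=
            (ENNReal.continuous_ofReal.tendsto p.2).eventually_lt_const ht1
          have := ((continuous_fst.tendsto p).eventually hE1).and
            ((continuous_snd.tendsto p).eventually hE2)
          filter_upwards [this] with q ⟨hq1, hq2⟩
          simp only [mem_compl_iff, mem_setOf_eq, not_le]
          exact hq2.trans hq1
        have : epi = ({p : (Fin d → ℝ) × ℝ | p.1 ∈ C} ∩ {p | 0 ≤ p.2}) ∩
            {p | g p.1 ≤ ENNReal.ofReal p.2} := by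
          ext p; simp [hepidef, and_assoc]
        rw [this]
        exact ((h1.inter h2).inter h3)
      have hepi_convex : Convex ℝ epi := by
        rintro p ⟨hp1, hp2, hp3⟩ q ⟨hq1, hq2, hq3⟩ a b ha hb hab
        refine ⟨hCconv hp1 hq1 ha hb hab, add_nonneg (mul_nonneg ha hp2) (mul_nonneg hb hq2), ?_⟩
        have h1 : (a • p + b • q).1 = a • p.1 + b • q.1 := rfl
        have h2 : (a • p + b • q).2 = a * p.2 + b * q.2 := rfl
        rw [h1, h2]
        calc g (a • p.1 + b • q.1) ≤ ENNReal.ofReal a * g p.1 + ENNReal.ofReal b * g q.1 :=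
              hgconv _ hp1 _ hq1 a b ha hb hab
          _ ≤ ENNReal.ofReal a * ENNReal.ofReal p.2 + ENNReal.ofReal b * ENNReal.ofReal q.2 := by
              gcongr
          _ = ENNReal.ofReal (a * p.2 + b * q.2) := by
              rw [← ENNReal.ofReal_mul ha, ← ENNReal.ofReal_mul hb,
                ← ENNReal.ofReal_add (by positivity) (by positivity)]
      have hxr : (x, r) ∉ epi := by
        rintro ⟨-, -, h3⟩
        exact absurd (h3.trans_lt hrg) (lt_irrefl _)
      obtain ⟨f, u, hfu, hux⟩ := geometric_hahn_banach_closed_point hepi_convex hepi_closed hxr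
      have hzero_mem : ((0 : Fin d → ℝ), (0 : ℝ)) ∈ epi :=
        ⟨hC0, le_rfl, by rw [hg0]; exact zero_le⟩
      have hu0 : 0 < u := by
        have := hfu _ hzero_mem
        simpa [show f ((0 : Fin d → ℝ), (0:ℝ)) = 0 from f.map_zero] using this
      -- f is nonpositive on epi
      have hcone : ∀ p ∈ epi, f p ≤ 0 := by
        intro p hp
        by_contra hfp
        push_neg at hfp
        have hscale : ∀ c : ℝ, 0 < c → c • p ∈ epi := by
          rintro c hc
          obtain ⟨hp1, hp2, hp3⟩ := hp
          refine ⟨hCcone c hc.le _ hp1, mul_nonneg hc.le hp2, ?_⟩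
          have h2 : (c • p).2 = c * p.2 := rfl
          have h1 : (c • p).1 = c • p.1 := rfl
          rw [h1, h2, hghom c hc _ hp1, ENNReal.ofReal_mul hc.le]
          exact mul_le_mul_right hp3 _
        have := hfu _ (hscale ((u + 1) / f p) (by positivity))
        rw [f.map_smul, smul_eq_mul] at this
        rw [div_mul_cancel₀ _ (ne_of_gt hfp)] at this
        linarith
      set v : Fin d → ℝ := fun i => f ((fun j => if i = j then (1:ℝ) else 0), 0) with hv
      set c : ℝ := f (0, 1) with hc
      have hf_eq : ∀ (y : Fin d → ℝ) (s : ℝ), f (y, s) = (∑ i, y i * v i) + s * c := by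
        intro y s
        have hys : (y, s) = ((y, (0:ℝ)) : (Fin d → ℝ) × ℝ) + (0, s) := by simp
        have h0s : ((0 : Fin d → ℝ), s) = s • ((0 : Fin d → ℝ), (1:ℝ)) := by
          rw [Prod.smul_mk, smul_zero, smul_eq_mul, mul_one]
        rw [hys, map_add, h0s, f.map_smul, smul_eq_mul]
        congr 1
        have h3 := LinearMap.pi_apply_eq_sum_univ
          (f.toLinearMap.comp (LinearMap.inl ℝ (Fin d → ℝ) ℝ)) y
        simp only [LinearMap.coe_comp, Function.comp_apply, LinearMap.coe_inl,
          ContinuousLinearMap.coe_coe] at h3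
        rw [h3]
        exact Finset.sum_congr rfl fun i _ => by rw [smul_eq_mul, hv]
      have hc0 : c ≤ 0 := by
        by_contra hcpos
        push_neg at hcpos
        set s₀ : ℝ := (g y₀).toReal with hs₀
        have hs₀0 : 0 ≤ s₀ := ENNReal.toReal_nonneg
        have hmem : ∀ j : ℕ, (y₀, s₀ + j) ∈ epi := by
          intro j
          have hj0 : (0:ℝ) ≤ (j:ℝ) := Nat.cast_nonneg j
          refine ⟨hy₀C, show (0:ℝ) ≤ s₀ + j by linarith, ?_⟩
          have h5 : g y₀ = ENNReal.ofReal s₀ := (ENNReal.ofReal_toReal hy₀).symm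
          show g y₀ ≤ ENNReal.ofReal (s₀ + j)
          rw [h5]
          exact ENNReal.ofReal_le_ofReal (by linarith)
        have hle : ∀ j : ℕ, (∑ i, y₀ i * v i) + (s₀ + j) * c ≤ 0 := by
          intro j
          have := hcone _ (hmem j)
          rwa [hf_eq] at this
        obtain ⟨j, hj⟩ := exists_nat_gt ((-((∑ i, y₀ i * v i) + s₀ * c)) / c)
        have := hle j
        rw [div_lt_iff₀ hcpos] at hj
        nlinarith
      have hepi_le : ∀ y ∈ C, g y ≠ ⊤ → (∑ i, y i * v i) + (g y).toReal * c ≤ 0 := by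
        intro y hy hgy
        have hmem : (y, (g y).toReal) ∈ epi :=
          ⟨hy, ENNReal.toReal_nonneg, by rw [ENNReal.ofReal_toReal hgy]⟩
        have := hcone _ hmem
        rwa [hf_eq] at this
      have hx_gt : u < (∑ i, x i * v i) + r * c := by rw [← hf_eq]; exact hux
      rcases hc0.lt_or_eq with hclt | hceq
      · -- c < 0
        refine ⟨(-c)⁻¹ • v, ?_, ?_⟩
        · intro y hy
          by_cases hgy : g y = ⊤
          · rw [hgy]; exact le_top
          · have h1 := hepi_le y hy hgy
            have hnc : 0 < -c := by linarith
            have h2 : ∑ i, ((-c)⁻¹ • v) i * y i = (-c)⁻¹ * ∑ i, y i * v i := by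
              rw [Finset.mul_sum]
              exact Finset.sum_congr rfl fun i _ => by
                simp only [Pi.smul_apply, smul_eq_mul]; ring
            rw [h2]
            have h3 : (-c)⁻¹ * (∑ i, y i * v i) ≤ (g y).toReal := by
              rw [inv_mul_le_iff₀ hnc]
              nlinarith
            calc ENNReal.ofReal ((-c)⁻¹ * ∑ i, y i * v i) ≤ ENNReal.ofReal ((g y).toReal) :=
                  ENNReal.ofReal_le_ofReal h3
              _ = g y := ENNReal.ofReal_toReal hgy
        · have hnc : 0 < -c := by linarith
          have h2 : ∑ i, ((-c)⁻¹ • v) i * x i = (-c)⁻¹ * ∑ i, x i * v i := by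
            rw [Finset.mul_sum]
            exact Finset.sum_congr rfl fun i _ => by
              simp only [Pi.smul_apply, smul_eq_mul]; ring
          rw [h2, lt_inv_mul_iff₀ hnc]
          nlinarith
      · -- c = 0
        have hdotx : 0 < ∑ i, x i * v i := by
          rw [hceq] at hx_gt
          simp only [mul_zero, add_zero] at hx_gt
          linarith
        refine ⟨((r + 1) / (∑ i, x i * v i)) • v, ?_, ?_⟩
        · intro y hy
          by_cases hgy : g y = ⊤
          · rw [hgy]; exact le_top
          · have h1 := hepi_le y hy hgy
            rw [hceq] at h1
            simp only [mul_zero, add_zero] at h1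
            have h2 : ∑ i, (((r + 1) / (∑ i, x i * v i)) • v) i * y i =
                ((r + 1) / (∑ i, x i * v i)) * ∑ i, y i * v i := by
              rw [Finset.mul_sum]
              exact Finset.sum_congr rfl fun i _ => by
                simp only [Pi.smul_apply, smul_eq_mul]; ring
            rw [h2]
            have h3 : ((r + 1) / (∑ i, x i * v i)) * (∑ i, y i * v i) ≤ 0 := by
              apply mul_nonpos_of_nonneg_of_nonpos (by positivity) h1
            rw [ENNReal.ofReal_eq_zero.2 h3]
            exact zero_le
        · have h2 : ∑ i, (((r + 1) / (∑ i, x i * v i)) • v) i * x i =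
              ((r + 1) / (∑ i, x i * v i)) * ∑ i, x i * v i := by
            rw [Finset.mul_sum]
            exact Finset.sum_congr rfl fun i _ => by
              simp only [Pi.smul_apply, smul_eq_mul]; ring
          rw [h2, div_mul_cancel₀ _ (ne_of_gt hdotx)]
          linarith
    · -- g = ⊤ on C
      push_neg at hfin
      have hQ : 0 < ∑ i, x i ^ 2 := by
        have h1 : ∃ i, x i ≠ 0 := by
          by_contra hcon
          push_neg at hcon
          exact hx0 (funext hcon)
        obtain ⟨i, hi⟩ := h1
        refine Finset.sum_pos' (fun j _ => sq_nonneg _) ⟨i, Finset.mem_univ i, ?_⟩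
        positivity
      refine ⟨((r + 1) / (∑ i, x i ^ 2)) • x, ?_, ?_⟩
      · intro y hy; rw [hfin y hy]; exact le_top
      · have h2 : ∑ i, (((r + 1) / (∑ i, x i ^ 2)) • x) i * x i =
            ((r + 1) / (∑ i, x i ^ 2)) * ∑ i, x i ^ 2 := by
          rw [Finset.mul_sum]
          exact Finset.sum_congr rfl fun i _ => by
            simp only [Pi.smul_apply, smul_eq_mul, sq]; ring
        rw [h2, div_mul_cancel₀ _ (ne_of_gt hQ)]
        linarith
  -- conclude
  by_contra hcon
  push_neg at hcon
  obtain ⟨r, hr0, h1, h2⟩ := ENNReal.lt_iff_exists_real_btwn.1 hcon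
  obtain ⟨w, hwK, hwx⟩ := main r hr0 h2
  have : ENNReal.ofReal r ≤ ⨆ w ∈ K, ENNReal.ofReal (∑ i, w i * x i) :=
    le_trans (ENNReal.ofReal_le_ofReal hwx.le) (le_iSup₂_of_le w hwK le_rfl)
  exact absurd (h1.trans_le this) (lt_irrefl _)

private def auxQ {d : ℕ} (e : ℕ → (Fin d → ℝ)) : ℕ → (Fin d → ℝ) → ℝ
  | 0 => fun y => ∑ i, e 0 i * y i
  | (M+1) => fun y => max (auxQ e M y) (∑ i, e (M+1) i * y i)

private lemma auxQ_cont {d : ℕ} (e : ℕ → (Fin d → ℝ)) (M : ℕ) : Continuous (auxQ e M) := by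
  induction M with
  | zero => exact continuous_finset_sum _ fun i _ => continuous_const.mul (continuous_apply i)
  | succ M ih =>
      exact ih.max (continuous_finset_sum _ fun i _ => continuous_const.mul (continuous_apply i))

private lemma auxQ_nonneg {d : ℕ} {e : ℕ → (Fin d → ℝ)} (he0 : e 0 = 0) (M : ℕ)
    (y : Fin d → ℝ) : 0 ≤ auxQ e M y := by
  induction M with
  | zero => simp [auxQ, he0]
  | succ M ih => exact le_trans ih (le_max_left _ _)

private lemma auxQ_mono {d : ℕ} (e : ℕ → (Fin d → ℝ)) (M : ℕ) (y : Fin d → ℝ) :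
    auxQ e M y ≤ auxQ e (M+1) y := le_max_left _ _

private lemma auxQ_ge {d : ℕ} (e : ℕ → (Fin d → ℝ)) {m M : ℕ} (hm : m ≤ M) (y : Fin d → ℝ) :
    ∑ i, e m i * y i ≤ auxQ e M y := by
  induction M with
  | zero => rw [Nat.le_zero.1 hm]; exact le_refl _
  | succ M ih =>
      rcases Nat.lt_succ_iff_lt_or_eq.1 (Nat.lt_succ_of_le hm) with h | h
      · exact le_trans (ih (Nat.lt_succ_iff.1 h)) (le_max_left _ _)
      · rw [h]; exact le_max_right _ _

private lemma auxQ_le_sum {d : ℕ} (e : ℕ → (Fin d → ℝ)) (M : ℕ) {y : Fin d → ℝ}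
    (hy : ∀ i, |y i| ≤ 1) : auxQ e M y ≤ ∑ m ∈ Finset.range (M+1), ∑ i, |e m i| := by
  have hdot : ∀ m : ℕ, ∑ i, e m i * y i ≤ ∑ i, |e m i| := by
    intro m
    calc ∑ i, e m i * y i ≤ |∑ i, e m i * y i| := le_abs_self _
      _ ≤ ∑ i, |e m i * y i| := Finset.abs_sum_le_sum_abs _ _
      _ ≤ ∑ i, |e m i| := Finset.sum_le_sum fun i _ => by
          rw [abs_mul]; exact mul_le_of_le_one_right (abs_nonneg _) (hy i)
  have hnn : ∀ m : ℕ, (0:ℝ) ≤ ∑ i, |e m i| := fun m => Finset.sum_nonneg fun i _ => abs_nonneg _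
  induction M with
  | zero => simpa [auxQ] using hdot 0
  | succ M ih =>
      rw [Finset.sum_range_succ]
      refine max_le ?_ ?_
      · exact le_trans ih (le_add_of_nonneg_right (hnn _))
      · refine le_trans (hdot (M+1)) (le_add_of_nonneg_left ?_)
        exact Finset.sum_nonneg fun m _ => hnn m
  -- note: `auxQ e (M+1) y = max (auxQ e M y) ...` is definitional

private lemma auxQ_attained {d : ℕ} (e : ℕ → (Fin d → ℝ)) (M : ℕ) (y : Fin d → ℝ) :
    ∃ m, m ≤ M ∧ ∑ i, e m i * y i = auxQ e M y := by
  induction M with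
  | zero => exact ⟨0, le_rfl, rfl⟩
  | succ M ih =>
      rcases le_total (∑ i, e (M+1) i * y i) (auxQ e M y) with h | h
      · obtain ⟨m, hm, hmeq⟩ := ih
        exact ⟨m, hm.trans (Nat.le_succ M), by rw [hmeq]; exact (max_eq_left h).symm⟩
      · exact ⟨M+1, le_rfl, (max_eq_right h).symm⟩

private lemma auxQ_sup {d : ℕ} {e : ℕ → (Fin d → ℝ)} (he0 : e 0 = 0) (y : Fin d → ℝ) :
    (⨆ M, ENNReal.ofReal (auxQ e M y)) = ⨆ m, ENNReal.ofReal (∑ i, e m i * y i) := by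
  apply le_antisymm
  · refine iSup_le fun M => ?_
    obtain ⟨m, _, hmeq⟩ := auxQ_attained e M y
    rw [← hmeq]
    exact le_iSup (fun m => ENNReal.ofReal (∑ i, e m i * y i)) m
  · refine iSup_le fun m => ?_
    exact le_trans (ENNReal.ofReal_le_ofReal (auxQ_ge e le_rfl y))
      (le_iSup (fun M => ENNReal.ofReal (auxQ e M y)) m)

/-- Reshetnyak lower semicontinuity (Theorem 3.1(1)). Measures are encoded by their polar
decompositions `μ_k = σ_k ν_k` with `ν_k = |μ_k|` finite, `σ_k` unit-length with values in a
closed convex cone `C`, and weak-* convergence is tested against `C_c(Ω)` functions. For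
`g : C → [0,∞]` lower semicontinuous, convex and positively `1`-homogeneous,
`∫ g(dμ/d|μ|) d|μ| ≤ liminf_k ∫ g(dμ_k/d|μ_k|) d|μ_k|`. -/
theorem reshetnyak_lsc {n d : ℕ} (Ω : Set (EuclideanSpace ℝ (Fin n))) (hΩ : IsOpen Ω)
    (C : Set (Fin d → ℝ)) (hCclosed : IsClosed C) (hCconv : Convex ℝ C)
    (hCcone : ∀ r : ℝ, 0 ≤ r → ∀ x ∈ C, r • x ∈ C)
    (g : (Fin d → ℝ) → ℝ≥0∞) (hglsc : LowerSemicontinuous g)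
    (hgconv : ∀ x ∈ C, ∀ y ∈ C, ∀ a b : ℝ, 0 ≤ a → 0 ≤ b → a + b = 1 →
      g (a • x + b • y) ≤ ENNReal.ofReal a * g x + ENNReal.ofReal b * g y)
    (hghom : ∀ r : ℝ, 0 < r → ∀ x ∈ C, g (r • x) = ENNReal.ofReal r * g x)
    (ν : Measure (EuclideanSpace ℝ (Fin n))) (νk : ℕ → Measure (EuclideanSpace ℝ (Fin n)))
    [IsFiniteMeasure ν] (hνk : ∀ k, IsFiniteMeasure (νk k))
    (hνΩ : ν Ωᶜ = 0) (hνkΩ : ∀ k, νk k Ωᶜ = 0)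
    (σ : EuclideanSpace ℝ (Fin n) → Fin d → ℝ)
    (σk : ℕ → EuclideanSpace ℝ (Fin n) → Fin d → ℝ)
    (hσm : AEMeasurable σ ν) (hσkm : ∀ k, AEMeasurable (σk k) (νk k))
    (hσ : ∀ᵐ x ∂ν, σ x ∈ C ∧ ∑ i, σ x i ^ 2 = 1)
    (hσk : ∀ k, ∀ᵐ x ∂(νk k), σk k x ∈ C ∧ ∑ i, σk k x i ^ 2 = 1)
    (hweak : ∀ φ : EuclideanSpace ℝ (Fin n) → ℝ, Continuous φ → HasCompactSupport φ →
      tsupport φ ⊆ Ω → ∀ i : Fin d,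
      Tendsto (fun k => ∫ x, φ x * σk k x i ∂(νk k)) atTop (nhds (∫ x, φ x * σ x i ∂ν))) :
    ∫⁻ x, g (σ x) ∂ν ≤ liminf (fun k => ∫⁻ x, g (σk k x) ∂(νk k)) atTop := by
  classical
  set L := liminf (fun k => ∫⁻ x, g (σk k x) ∂(νk k)) atTop with hLdef
  -- measurable representative of σ
  set τ := hσm.mk σ with hτdef
  have hτmeas : Measurable τ := hσm.measurable_mk
  have hστ : σ =ᵐ[ν] τ := hσm.ae_eq_mk
  have hτae : ∀ᵐ x ∂ν, τ x ∈ C ∧ ∑ i, τ x i ^ 2 = 1 := by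
    filter_upwards [hσ, hστ] with x h1 h2
    rw [← h2]; exact h1
  have hτbd : ∀ᵐ x ∂ν, ∀ i, |τ x i| ≤ 1 := by
    filter_upwards [hτae] with x hx i
    rw [← sq_le_one_iff_abs_le_one, ← hx.2]
    exact Finset.single_le_sum (f := fun j => τ x j ^ 2) (fun j _ => sq_nonneg _)
      (Finset.mem_univ i)
  have hσbd : ∀ᵐ x ∂ν, ∀ i, |σ x i| ≤ 1 := by
    filter_upwards [hσ] with x hx i
    rw [← sq_le_one_iff_abs_le_one, ← hx.2]
    exact Finset.single_le_sum (f := fun j => σ x j ^ 2) (fun j _ => sq_nonneg _)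
      (Finset.mem_univ i)
  have hσkbd : ∀ k, ∀ᵐ x ∂(νk k), ∀ i, |σk k x i| ≤ 1 := by
    intro k
    filter_upwards [hσk k] with x hx i
    rw [← sq_le_one_iff_abs_le_one, ← hx.2]
    exact Finset.single_le_sum (f := fun j => σk k x j ^ 2) (fun j _ => sq_nonneg _)
      (Finset.mem_univ i)
  -- the dual set and a countable subfamily
  set K : Set (Fin d → ℝ) := {w | ∀ y ∈ C, ENNReal.ofReal (∑ i, w i * y i) ≤ g y} with hKdef
  have h0K : (0 : Fin d → ℝ) ∈ K := by
    intro y hy; simp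
  obtain ⟨e, he0, heK, hesup⟩ := aux_countable_sup K h0K
  -- pointwise representation
  have hpt : ∀ᵐ x ∂ν, g (τ x) = ⨆ m, ENNReal.ofReal (∑ i, e m i * τ x i) := by
    filter_upwards [hτae] with x hx
    have hx0 : τ x ≠ 0 := by
      intro h
      have := hx.2
      rw [h] at this
      simp at this
    apply le_antisymm
    · rw [← hesup]
      exact aux_dual_repr hCclosed hCconv hCcone hglsc hgconv hghom hx.1 hx0
    · exact iSup_le fun m => heK m (τ x) hx.1
  -- monotone convergence
  have hqmeas : ∀ M : ℕ, Measurable fun x => auxQ e M (τ x) :=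
    fun M => (auxQ_cont e M).measurable.comp hτmeas
  have hmct : ∫⁻ x, g (τ x) ∂ν = ⨆ M, ∫⁻ x, ENNReal.ofReal (auxQ e M (τ x)) ∂ν := by
    rw [← lintegral_iSup' (fun M => ((hqmeas M).ennreal_ofReal).aemeasurable)
      (Eventually.of_forall fun x => monotone_nat_of_le_succ fun M =>
        ENNReal.ofReal_le_ofReal (auxQ_mono e M (τ x)))]
    apply lintegral_congr_ae
    filter_upwards [hpt] with x hx
    rw [hx, ← auxQ_sup he0 (τ x)]
  have hLHS : ∫⁻ x, g (σ x) ∂ν = ∫⁻ x, g (τ x) ∂ν :=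
    lintegral_congr_ae (hστ.fun_comp g)
  rw [hLHS, hmct]
  refine iSup_le fun M => ?_
  -- fixed M : show ∫⁻ ofReal (auxQ e M (τ x)) ∂ν ≤ L
  apply ENNReal.le_of_forall_pos_le_add
  intro ε' hε' hLlt
  set cb : ℕ → ℝ := fun m => ∑ i, |e m i| with hcbdef
  have hcb0 : ∀ m, 0 ≤ cb m := fun m => Finset.sum_nonneg fun i _ => abs_nonneg _
  set Cb : ℝ := ∑ m ∈ Finset.range (M+1), cb m with hCbdef
  have hCb0 : 0 ≤ Cb := Finset.sum_nonneg fun m _ => hcb0 m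
  set ε : ℝ := (ε' : ℝ) / (2 * Cb + 1) with hεdef
  have hε : 0 < ε := div_pos (by exact_mod_cast hε') (by linarith)
  have hεbound : 2 * Cb * ε ≤ (ε' : ℝ) := by
    have h1 : 2 * Cb * ε ≤ (2 * Cb + 1) * ε := by nlinarith
    have h2 : (2 * Cb + 1) * ε = (ε' : ℝ) := by
      rw [hεdef, mul_div_cancel₀]
      positivity
    linarith
  have hεE : (ENNReal.ofReal ε) ≠ 0 := by
    simp [hε, hε.not_ge]
  -- the partition
  set B : ℕ → Set (EuclideanSpace ℝ (Fin n)) :=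
    fun m => {x | ∑ i, e m i * τ x i = auxQ e M (τ x)} with hBdef
  have hBmeas : ∀ m, MeasurableSet (B m) := by
    intro m
    have hsub : Measurable fun x => (∑ i, e m i * τ x i) - auxQ e M (τ x) :=
      ((continuous_finset_sum _ fun i _ =>
        continuous_const.mul (continuous_apply i)).measurable.comp hτmeas).sub (hqmeas M)
    have : B m = (fun x => (∑ i, e m i * τ x i) - auxQ e M (τ x)) ⁻¹' {0} := by
      ext x; simp [hBdef, sub_eq_zero]
    rw [this]
    exact hsub (measurableSet_singleton 0)
  set A : ℕ → Set (EuclideanSpace ℝ (Fin n)) :=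
    fun m => B m \ ⋃ (l : ℕ) (_ : l < m), B l with hAdef
  have hAmeas : ∀ m, MeasurableSet (A m) :=
    fun m => (hBmeas m).diff (MeasurableSet.iUnion fun l => MeasurableSet.iUnion fun _ => hBmeas l)
  have hAB : ∀ m, A m ⊆ B m := fun m => diff_subset
  have hAdisj : ∀ m l, m ≠ l → Disjoint (A m) (A l) := by
    have haux : ∀ m l, m < l → Disjoint (A m) (A l) := by
      intro m l hml
      refine Set.disjoint_left.2 fun x hxm hxl => ?_
      exact hxl.2 (mem_iUnion₂.2 ⟨m, hml, hxm.1⟩)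
    intro m l hne
    rcases hne.lt_or_gt with h | h
    · exact haux m l h
    · exact (haux l m h).symm
  have hAcover : ∀ x, ∃ m, m ≤ M ∧ x ∈ A m := by
    intro x
    obtain ⟨m', hm', hBm'⟩ := auxQ_attained e M (τ x)
    have hex : ∃ m, x ∈ B m := ⟨m', hBm'⟩
    refine ⟨Nat.find hex, le_trans (Nat.find_min' hex hBm') hm', Nat.find_spec hex, ?_⟩
    intro hcon
    obtain ⟨l, hl, hxl⟩ := mem_iUnion₂.1 hcon
    exact Nat.find_min hex hl hxl
  have hcoverEq : (⋃ m ∈ Finset.range (M+1), A m) = univ := by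
    refine eq_univ_of_forall fun x => ?_
    obtain ⟨m, hm, hmem⟩ := hAcover x
    exact mem_iUnion₂.2 ⟨m, Finset.mem_range.2 (Nat.lt_succ_of_le hm), hmem⟩
  -- inner compact approximations
  have hKex : ∀ m, ∃ Km, Km ⊆ A m ∩ Ω ∧ IsCompact Km ∧ ν ((A m ∩ Ω) \ Km) < ENNReal.ofReal ε :=
    fun m => ((hAmeas m).inter hΩ.measurableSet).exists_isCompact_diff_lt
      (measure_ne_top ν _) hεE
  choose Km hKmsub hKmcomp hKmdiff using hKex
  have hKmA : ∀ m, Km m ⊆ A m := fun m => (hKmsub m).trans inter_subset_left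
  have hKmΩ : ∀ m, Km m ⊆ Ω := fun m => (hKmsub m).trans inter_subset_right
  have hKmdisj : ∀ m l, m ≠ l → Disjoint (Km m) (Km l) :=
    fun m l h => (hAdisj m l h).mono (hKmA m) (hKmA l)
  have hνAK : ∀ m, (ν (A m \ Km m)).toReal ≤ ε := by
    intro m
    have h1 : A m \ Km m ⊆ ((A m ∩ Ω) \ Km m) ∪ Ωᶜ := by
      rintro x ⟨hx1, hx2⟩
      by_cases hxΩ : x ∈ Ω
      · exact Or.inl ⟨⟨hx1, hxΩ⟩, hx2⟩
      · exact Or.inr hxΩ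
    have h2 : ν (A m \ Km m) ≤ ENNReal.ofReal ε := by
      refine le_trans (measure_mono h1) (le_trans (measure_union_le _ _) ?_)
      rw [hνΩ, add_zero]
      exact (hKmdiff m).le
    exact ENNReal.toReal_le_of_le_ofReal hε.le h2
  -- outer open approximations
  have hVex : ∀ m, ∃ V, Km m ⊆ V ∧ IsOpen V ∧ ν (V \ Km m) < ENNReal.ofReal ε := by
    intro m
    obtain ⟨V, hV1, hV2, hV3⟩ := (Km m).exists_isOpen_lt_of_lt _
      (ENNReal.lt_add_right (measure_ne_top ν _) hεE)
    exact ⟨V, hV1, hV2, measure_diff_lt_of_lt_add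
      (hKmcomp m).isClosed.measurableSet.nullMeasurableSet hV1 (measure_ne_top ν _) hV3⟩
  choose V hKmV hVopen hνVK using hVex
  obtain ⟨D, hDopen, hKmD, hDdisj⟩ := aux_disjoint_opens (M+1) Km hKmcomp hKmdisj
  set U : ℕ → Set (EuclideanSpace ℝ (Fin n)) := fun m => V m ∩ Ω ∩ D m with hUdef
  have hUopen : ∀ m, IsOpen (U m) := fun m => ((hVopen m).inter hΩ).inter (hDopen m)
  have hKmU : ∀ m, Km m ⊆ U m :=
    fun m => subset_inter (subset_inter (hKmV m) (hKmΩ m)) (hKmD m)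
  have hUdisj : ∀ m l, m < M+1 → l < M+1 → m ≠ l → Disjoint (U m) (U l) :=
    fun m l hm hl hne => (hDdisj m l hm hl hne).mono inter_subset_right inter_subset_right
  have hUV : ∀ m, U m ⊆ V m := fun m => inter_subset_left.trans inter_subset_left
  have hUΩ : ∀ m, U m ⊆ Ω := fun m => inter_subset_left.trans inter_subset_right
  have hνUK : ∀ m, (ν (U m \ Km m)).toReal ≤ ε := fun m =>
    ENNReal.toReal_le_of_le_ofReal hε.le
      (le_trans (measure_mono (diff_subset_diff_left (hUV m))) (hνVK m).le)
  -- the cut-off functions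
  have hφex : ∀ m, ∃ φ : EuclideanSpace ℝ (Fin n) → ℝ, Continuous φ ∧ HasCompactSupport φ ∧
      tsupport φ ⊆ U m ∧ EqOn φ 1 (Km m) ∧ ∀ x, 0 ≤ φ x ∧ φ x ≤ 1 := by
    intro m
    obtain ⟨Lm, hLmc, hKmint, hLmU⟩ := exists_compact_between (hKmcomp m) (hUopen m) (hKmU m)
    obtain ⟨φ, hφ1, hφ0, hφcs, hφ01⟩ := exists_continuous_one_zero_of_isCompact (hKmcomp m)
      isOpen_interior.isClosed_compl
      (Set.disjoint_left.2 fun x hx hx' => hx' (hKmint hx))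
    refine ⟨φ, φ.continuous, hφcs, ?_, hφ1, fun x => ⟨(hφ01 x).1, (hφ01 x).2⟩⟩
    calc tsupport ⇑φ ⊆ closure (interior Lm) := by
          apply closure_mono
          rw [Function.support_subset_iff']
          intro x hx
          exact hφ0 hx
      _ ⊆ Lm := by
          nth_rewrite 2 [← hLmc.isClosed.closure_eq]
          exact closure_mono interior_subset
      _ ⊆ U m := hLmU
  choose φ hφcont hφcs hφsupp hφone hφ01 using hφex
  have hφΩ : ∀ m, tsupport (φ m) ⊆ Ω := fun m => (hφsupp m).trans (hUΩ m)
  -- measurability and integrability of the dot products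
  have hdotcont : ∀ m, Continuous fun y : Fin d → ℝ => ∑ i, e m i * y i :=
    fun m => continuous_finset_sum _ fun i _ => continuous_const.mul (continuous_apply i)
  have habs_dot : ∀ (m : ℕ) (y : Fin d → ℝ), (∀ i, |y i| ≤ 1) → |∑ i, e m i * y i| ≤ cb m := by
    intro m y hy
    calc |∑ i, e m i * y i| ≤ ∑ i, |e m i * y i| := Finset.abs_sum_le_sum_abs _ _
      _ ≤ ∑ i, |e m i| := Finset.sum_le_sum fun i _ => by
          rw [abs_mul]; exact mul_le_of_le_one_right (abs_nonneg _) (hy i)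
  have hdotτbd : ∀ m, ∀ᵐ x ∂ν, |∑ i, e m i * τ x i| ≤ cb m := by
    intro m; filter_upwards [hτbd] with x hx; exact habs_dot m _ hx
  have hdotσbd : ∀ m, ∀ᵐ x ∂ν, |∑ i, e m i * σ x i| ≤ cb m := by
    intro m; filter_upwards [hσbd] with x hx; exact habs_dot m _ hx
  have hτint : ∀ m, Integrable (fun x => ∑ i, e m i * τ x i) ν := by
    intro m
    refine Integrable.mono' (integrable_const (cb m))
      (((hdotcont m).measurable.comp hτmeas).aestronglyMeasurable) ?_
    filter_upwards [hdotτbd m] with x hx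
    rwa [Real.norm_eq_abs]
  have hσam : ∀ i : Fin d, AEMeasurable (fun x => σ x i) ν :=
    fun i => (measurable_pi_apply i).comp_aemeasurable hσm
  have hdotσam : ∀ m, AEMeasurable (fun x => ∑ i, e m i * σ x i) ν :=
    fun m => Finset.aemeasurable_fun_sum _ fun i _ => aemeasurable_const.mul (hσam i)
  have hφσint : ∀ m, Integrable (fun x => φ m x * ∑ i, e m i * σ x i) ν := by
    intro m
    refine Integrable.mono' (integrable_const (cb m))
      ((hφcont m).aestronglyMeasurable.mul (hdotσam m).aestronglyMeasurable) ?_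
    filter_upwards [hdotσbd m] with x hx
    rw [Real.norm_eq_abs, abs_mul]
    calc |φ m x| * |∑ i, e m i * σ x i| ≤ 1 * (cb m) := by
          apply mul_le_mul _ hx (abs_nonneg _) zero_le_one
          rw [abs_of_nonneg (hφ01 m x).1]; exact (hφ01 m x).2
      _ = cb m := one_mul _
  have hφσiint : ∀ (m : ℕ) (i : Fin d), Integrable (fun x => φ m x * σ x i) ν := by
    intro m i
    refine Integrable.mono' (integrable_const 1)
      ((hφcont m).aestronglyMeasurable.mul (hσam i).aestronglyMeasurable) ?_
    filter_upwards [hσbd] with x hx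
    rw [Real.norm_eq_abs, abs_mul]
    calc |φ m x| * |σ x i| ≤ 1 * 1 := by
          apply mul_le_mul _ (hx i) (abs_nonneg _) zero_le_one
          rw [abs_of_nonneg (hφ01 m x).1]; exact (hφ01 m x).2
      _ = 1 := one_mul _
  have hσkam : ∀ (k : ℕ) (i : Fin d), AEMeasurable (fun x => σk k x i) (νk k) :=
    fun k i => (measurable_pi_apply i).comp_aemeasurable (hσkm k)
  have hdotσkbd : ∀ k m, ∀ᵐ x ∂(νk k), |∑ i, e m i * σk k x i| ≤ cb m := by
    intro k m; filter_upwards [hσkbd k] with x hx; exact habs_dot m _ hx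
  have hφσkint : ∀ k m, Integrable (fun x => φ m x * ∑ i, e m i * σk k x i) (νk k) := by
    intro k m
    haveI := hνk k
    refine Integrable.mono' (integrable_const (cb m))
      ((hφcont m).aestronglyMeasurable.mul
        ((Finset.aemeasurable_fun_sum _ fun i _ =>
          aemeasurable_const.mul (hσkam k i)).aestronglyMeasurable)) ?_
    filter_upwards [hdotσkbd k m] with x hx
    rw [Real.norm_eq_abs, abs_mul]
    calc |φ m x| * |∑ i, e m i * σk k x i| ≤ 1 * (cb m) := by
          apply mul_le_mul _ hx (abs_nonneg _) zero_le_one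
          rw [abs_of_nonneg (hφ01 m x).1]; exact (hφ01 m x).2
      _ = cb m := one_mul _
  have hφσkiint : ∀ (k m : ℕ) (i : Fin d), Integrable (fun x => φ m x * σk k x i) (νk k) := by
    intro k m i
    haveI := hνk k
    refine Integrable.mono' (integrable_const 1)
      ((hφcont m).aestronglyMeasurable.mul (hσkam k i).aestronglyMeasurable) ?_
    filter_upwards [hσkbd k] with x hx
    rw [Real.norm_eq_abs, abs_mul]
    calc |φ m x| * |σk k x i| ≤ 1 * 1 := by
          apply mul_le_mul _ (hx i) (abs_nonneg _) zero_le_one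
          rw [abs_of_nonneg (hφ01 m x).1]; exact (hφ01 m x).2
      _ = 1 := one_mul _
  -- integrability of auxQ ∘ τ
  have hqτint : Integrable (fun x => auxQ e M (τ x)) ν := by
    refine Integrable.mono' (integrable_const Cb) (hqmeas M).aestronglyMeasurable ?_
    filter_upwards [hτbd] with x hx
    rw [Real.norm_eq_abs, abs_of_nonneg (auxQ_nonneg he0 M (τ x))]
    exact auxQ_le_sum e M hx
  -- the limit quantity S
  set S : ℝ := ∑ m ∈ Finset.range (M+1), ∫ x, φ m x * ∑ i, e m i * σ x i ∂ν with hSdef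
  -- rewriting the integrals as finite sums of weak-convergence test quantities
  have hrw : ∀ (μ : Measure (EuclideanSpace ℝ (Fin n))) (υ : EuclideanSpace ℝ (Fin n) → Fin d → ℝ)
      (m : ℕ), (∀ i : Fin d, Integrable (fun x => φ m x * υ x i) μ) →
      ∫ x, φ m x * ∑ i, e m i * υ x i ∂μ = ∑ i, e m i * ∫ x, φ m x * υ x i ∂μ := by
    intro μ υ m hint
    have h1 : ∀ x, φ m x * ∑ i, e m i * υ x i = ∑ i, e m i * (φ m x * υ x i) := by
      intro x
      rw [Finset.mul_sum]
      exact Finset.sum_congr rfl fun i _ => by ring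
    simp_rw [h1]
    rw [integral_finset_sum _ fun i _ => (hint i).const_mul (e m i)]
    exact Finset.sum_congr rfl fun i _ => integral_const_mul (e m i) _
  have hTend : Tendsto (fun k => ∑ m ∈ Finset.range (M+1),
      ∫ x, φ m x * ∑ i, e m i * σk k x i ∂(νk k)) atTop (nhds S) := by
    rw [hSdef]
    refine tendsto_finset_sum _ fun m _ => ?_
    have hrw1 : (fun k => ∫ x, φ m x * ∑ i, e m i * σk k x i ∂(νk k)) =
        fun k => ∑ i, e m i * ∫ x, φ m x * σk k x i ∂(νk k) := by
      funext k
      exact hrw (νk k) (σk k) m (hφσkiint k m)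
    rw [hrw1, hrw ν σ m (hφσiint m)]
    exact tendsto_finset_sum _ fun i _ =>
      ((hweak (φ m) (hφcont m) (hφcs m) (hφΩ m) i).const_mul (e m i))
  -- each S_k is dominated by the k-th energy
  have hSk_le : ∀ k, ENNReal.ofReal (∑ m ∈ Finset.range (M+1),
      ∫ x, φ m x * ∑ i, e m i * σk k x i ∂(νk k)) ≤ ∫⁻ x, g (σk k x) ∂(νk k) := by
    intro k
    haveI := hνk k
    rw [← integral_finset_sum _ fun m _ => hφσkint k m]
    refine le_trans (aux_ofReal_integral_le (integrable_finset_sum _ fun m _ => hφσkint k m))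
      (lintegral_mono_ae ?_)
    filter_upwards [hσk k] with x hx
    by_cases hex : ∃ m₀ ∈ Finset.range (M+1), φ m₀ x ≠ 0
    · obtain ⟨m₀, hm₀mem, hm₀⟩ := hex
      have hxU : x ∈ U m₀ := hφsupp m₀ (subset_tsupport _ hm₀)
      have hzero : ∀ l ∈ Finset.range (M+1), l ≠ m₀ →
          φ l x * (∑ i, e l i * σk k x i) = 0 := by
        intro l hl hlne
        have hxl : x ∉ tsupport (φ l) := by
          intro hmem
          exact Set.disjoint_left.1
            (hUdisj m₀ l (Finset.mem_range.1 hm₀mem) (Finset.mem_range.1 hl) hlne.symm)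
            hxU (hφsupp l hmem)
        rw [image_eq_zero_of_notMem_tsupport hxl, zero_mul]
      rw [Finset.sum_eq_single_of_mem m₀ hm₀mem hzero]
      rcases le_or_gt (∑ i, e m₀ i * σk k x i) 0 with hd0 | hd0
      · rw [ENNReal.ofReal_eq_zero.2 (mul_nonpos_of_nonneg_of_nonpos (hφ01 m₀ x).1 hd0)]
        exact zero_le
      · refine le_trans (ENNReal.ofReal_le_ofReal ?_) (heK m₀ _ hx.1)
        calc φ m₀ x * (∑ i, e m₀ i * σk k x i) ≤ 1 * (∑ i, e m₀ i * σk k x i) :=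
              mul_le_mul_of_nonneg_right (hφ01 m₀ x).2 hd0.le
          _ = _ := one_mul _
    · push_neg at hex
      have hz : ∑ m ∈ Finset.range (M+1), φ m x * (∑ i, e m i * σk k x i) = 0 :=
        Finset.sum_eq_zero fun m hm => by rw [hex m hm, zero_mul]
      rw [hz, ENNReal.ofReal_zero]
      exact zero_le
  have hofS : ENNReal.ofReal S ≤ L := by
    have h1 : Tendsto (fun k => ENNReal.ofReal (∑ m ∈ Finset.range (M+1),
        ∫ x, φ m x * ∑ i, e m i * σk k x i ∂(νk k))) atTop (nhds (ENNReal.ofReal S)) :=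
      (ENNReal.continuous_ofReal.tendsto S).comp hTend
    rw [← h1.liminf_eq]
    exact liminf_le_liminf (Eventually.of_forall hSk_le)
  -- the real-variable estimate
  have hreal : ∫ x, auxQ e M (τ x) ∂ν ≤ S + 2 * Cb * ε := by
    have hpair : (↑(Finset.range (M+1)) : Set ℕ).Pairwise (Function.onFun Disjoint A) :=
      fun m _ l _ h => hAdisj m l h
    have hsplit : ∫ x, auxQ e M (τ x) ∂ν =
        ∑ m ∈ Finset.range (M+1), ∫ x in A m, auxQ e M (τ x) ∂ν := by
      rw [← integral_biUnion_finset (Finset.range (M+1)) (fun m _ => hAmeas m) hpair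
        (fun m _ => hqτint.integrableOn), hcoverEq, Measure.restrict_univ]
    have hbound : ∀ m ∈ Finset.range (M+1), ∫ x in A m, auxQ e M (τ x) ∂ν ≤
        (∫ x, φ m x * ∑ i, e m i * σ x i ∂ν) + 2 * cb m * ε := by
      intro m _
      have h2 : ∫ x in A m, auxQ e M (τ x) ∂ν = ∫ x in A m, (∑ i, e m i * τ x i) ∂ν :=
        (setIntegral_congr_fun (hAmeas m) fun x hx => (hAB m hx).symm)
      have h3 : ∫ x in A m, (∑ i, e m i * τ x i) ∂ν ≤
          (∫ x in Km m, (∑ i, e m i * τ x i) ∂ν) + cb m * ε := by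
        have hAm : A m = Km m ∪ (A m \ Km m) := (union_diff_cancel (hKmA m)).symm
        rw [hAm, setIntegral_union disjoint_sdiff_right
          ((hAmeas m).diff (hKmcomp m).isClosed.measurableSet)
          (hτint m).integrableOn (hτint m).integrableOn]
        have h4 : ∫ x in A m \ Km m, (∑ i, e m i * τ x i) ∂ν ≤
            ∫ x in A m \ Km m, cb m ∂ν := by
          refine integral_mono_ae (hτint m).integrableOn (integrableOn_const)
            (ae_restrict_of_ae ((hdotτbd m).mono fun x hx => le_trans (le_abs_self _) hx))
        rw [setIntegral_const, smul_eq_mul, measureReal_def] at h4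
        have h5 : (ν (A m \ Km m)).toReal * cb m ≤ ε * cb m :=
          mul_le_mul_of_nonneg_right (hνAK m) (hcb0 m)
        have h6 : ∫ x in A m \ Km m, (∑ i, e m i * τ x i) ∂ν ≤ cb m * ε := by
          rw [mul_comm]
          linarith
        linarith
      have h7 : ∫ x in Km m, (∑ i, e m i * τ x i) ∂ν =
          ∫ x in Km m, (∑ i, e m i * σ x i) ∂ν := by
        apply integral_congr_ae
        apply ae_restrict_of_ae
        filter_upwards [hστ] with x hx
        exact Finset.sum_congr rfl fun i _ => by rw [hx]
      have h8 : ∫ x in Km m, (∑ i, e m i * σ x i) ∂ν ≤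
          (∫ x, φ m x * ∑ i, e m i * σ x i ∂ν) + cb m * ε := by
        have hadd : ∫ x, φ m x * (∑ i, e m i * σ x i) ∂ν =
            (∫ x in Km m, φ m x * (∑ i, e m i * σ x i) ∂ν) +
            ∫ x in (Km m)ᶜ, φ m x * (∑ i, e m i * σ x i) ∂ν :=
          (integral_add_compl (hKmcomp m).isClosed.measurableSet (hφσint m)).symm
        have h9 : ∫ x in Km m, φ m x * (∑ i, e m i * σ x i) ∂ν =
            ∫ x in Km m, (∑ i, e m i * σ x i) ∂ν :=
          setIntegral_congr_fun (hKmcomp m).isClosed.measurableSet fun x hx => by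
            rw [hφone m hx, Pi.one_apply, one_mul]
        have hind_int : Integrable ((U m \ Km m).indicator fun _ => cb m) ν := by
          apply Integrable.indicator (integrable_const (cb m))
          exact ((hUopen m).measurableSet).diff (hKmcomp m).isClosed.measurableSet
        have h10 : |∫ x in (Km m)ᶜ, φ m x * (∑ i, e m i * σ x i) ∂ν| ≤ cb m * ε := by
          have h11 : |∫ x in (Km m)ᶜ, φ m x * (∑ i, e m i * σ x i) ∂ν| ≤
              ∫ x in (Km m)ᶜ, |φ m x| * |∑ i, e m i * σ x i| ∂ν := by
            simpa [Real.norm_eq_abs] using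
              norm_integral_le_integral_norm (μ := ν.restrict (Km m)ᶜ)
                (fun x => φ m x * (∑ i, e m i * σ x i))
          have h12 : ∫ x in (Km m)ᶜ, |φ m x| * |∑ i, e m i * σ x i| ∂ν ≤
              ∫ x in (Km m)ᶜ, ((U m \ Km m).indicator fun _ => cb m) x ∂ν := by
            have habs_int : Integrable (fun x => |φ m x| * |∑ i, e m i * σ x i|) ν :=
              (hφσint m).abs.congr (Eventually.of_forall fun x => abs_mul _ _)
            refine integral_mono_ae habs_int.integrableOn hind_int.integrableOn ?_
            filter_upwards [ae_restrict_mem (hKmcomp m).isClosed.measurableSet.compl,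
              ae_restrict_of_ae (hdotσbd m)] with x hxK hxd
            by_cases hxU : x ∈ U m
            · have hxUK : x ∈ U m \ Km m := ⟨hxU, hxK⟩
              rw [Set.indicator_of_mem hxUK]
              calc |φ m x| * |∑ i, e m i * σ x i| ≤ 1 * cb m := by
                    apply mul_le_mul _ hxd (abs_nonneg _) zero_le_one
                    rw [abs_of_nonneg (hφ01 m x).1]; exact (hφ01 m x).2
                _ = cb m := one_mul _
            · have hz : φ m x = 0 :=
                image_eq_zero_of_notMem_tsupport fun hc => hxU (hφsupp m hc)
              rw [hz, abs_zero, zero_mul]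
              exact Set.indicator_nonneg (fun _ _ => hcb0 m) x
          have h13 : ∫ x in (Km m)ᶜ, ((U m \ Km m).indicator fun _ => cb m) x ∂ν ≤
              ∫ x, ((U m \ Km m).indicator fun _ => cb m) x ∂ν :=
            setIntegral_le_integral hind_int
              (Eventually.of_forall fun x => Set.indicator_nonneg (fun _ _ => hcb0 m) x)
          have h14 : ∫ x, ((U m \ Km m).indicator fun _ => cb m) x ∂ν =
              (ν (U m \ Km m)).toReal * cb m := by
            rw [integral_indicator_const _
              (((hUopen m).measurableSet).diff (hKmcomp m).isClosed.measurableSet), smul_eq_mul, measureReal_def]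
          have h15 : (ν (U m \ Km m)).toReal * cb m ≤ ε * cb m :=
            mul_le_mul_of_nonneg_right (hνUK m) (hcb0 m)
          rw [mul_comm (cb m) ε]
          linarith
        linarith [neg_abs_le (∫ x in (Km m)ᶜ, φ m x * (∑ i, e m i * σ x i) ∂ν), hadd, h9]
      linarith
    calc ∫ x, auxQ e M (τ x) ∂ν = _ := hsplit
      _ ≤ ∑ m ∈ Finset.range (M+1),
          ((∫ x, φ m x * ∑ i, e m i * σ x i ∂ν) + 2 * cb m * ε) := Finset.sum_le_sum hbound
      _ = S + 2 * Cb * ε := by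
          rw [Finset.sum_add_distrib, ← hSdef]
          congr 1
          rw [hCbdef, Finset.mul_sum, Finset.sum_mul]
  -- conclusion
  have hlast : ∫⁻ x, ENNReal.ofReal (auxQ e M (τ x)) ∂ν =
      ENNReal.ofReal (∫ x, auxQ e M (τ x) ∂ν) :=
    (ofReal_integral_eq_lintegral_ofReal hqτint
      (Eventually.of_forall fun x => auxQ_nonneg he0 M (τ x))).symm
  rw [hlast]
  calc ENNReal.ofReal (∫ x, auxQ e M (τ x) ∂ν) ≤ ENNReal.ofReal (S + 2 * Cb * ε) :=
        ENNReal.ofReal_le_ofReal hreal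
    _ ≤ ENNReal.ofReal S + ENNReal.ofReal (2 * Cb * ε) := ENNReal.ofReal_add_le
    _ ≤ L + ε' := by
        refine add_le_add hofS (le_trans (ENNReal.ofReal_le_ofReal hεbound) ?_)
        rw [ENNReal.ofReal_coe_nnreal]
end

section
/- With Ω, C, and measures as above, if g : C → [0, ∞) is continuous and positively 1-homogeneous and μ_k → μ strictly (i.e., μ_k converges weakly-* to μ and |μ_k|(Ω) → |μ|(Ω)), then ∫_Ω g(dμ_k/d|μ_k|) d|μ_k| → ∫_Ω g(dμ/d|μ|) d|μ|. -/
open MeasureTheory Filter ENNReal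

open MeasureTheory Filter ENNReal Metric Set

noncomputable def ballProj {d : ℕ} (y : EuclideanSpace ℝ (Fin d)) : EuclideanSpace ℝ (Fin d) :=
  (max 1 ‖y‖)⁻¹ • y

lemma ballProj_norm_le {d : ℕ} (y : EuclideanSpace ℝ (Fin d)) : ‖ballProj y‖ ≤ 1 := by
  rw [ballProj, norm_smul, norm_inv, Real.norm_eq_abs, abs_of_pos (by positivity)]
  rw [inv_mul_le_iff₀ (by positivity), mul_one]
  exact le_max_right _ _

lemma ballProj_continuous {d : ℕ} : Continuous (ballProj (d := d)) := by
  refine Continuous.smul (f := fun y : EuclideanSpace ℝ (Fin d) => (max 1 ‖y‖)⁻¹) ?_ continuous_id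
  exact (continuous_const.max continuous_norm).inv₀ (fun x => by positivity)

lemma ballProj_sub_le {d : ℕ} (a b : EuclideanSpace ℝ (Fin d)) (hb : ‖b‖ ≤ 1) :
    ‖ballProj a - b‖ ≤ ‖a - b‖ := by
  rcases le_or_gt ‖a‖ 1 with h | h
  · rw [ballProj, max_eq_left h]; simp
  · have ha0 : (0:ℝ) < ‖a‖ := by linarith
    set t : ℝ := ‖a‖⁻¹ with ht
    have hP : ballProj a = t • a := by rw [ballProj, max_eq_right h.le]
    have ht1 : t < 1 := by rw [ht]; exact inv_lt_one_of_one_lt₀ h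
    have ht0 : 0 < t := by positivity
    have key : ‖t • a - b‖ ^ 2 ≤ ‖a - b‖ ^ 2 := by
      have e1 : ‖t • a - b‖ ^ 2 = t^2 * ‖a‖^2 - 2 * (t * inner ℝ a b) + ‖b‖^2 := by
        rw [norm_sub_sq_real, norm_smul, real_inner_smul_left]
        rw [Real.norm_eq_abs, abs_of_pos ht0]; ring
      have e2 : ‖a - b‖ ^ 2 = ‖a‖^2 - 2 * inner ℝ a b + ‖b‖^2 := norm_sub_sq_real a b
      have hib : (inner ℝ a b : ℝ) ≤ ‖a‖ := by
        calc (inner ℝ a b : ℝ) ≤ ‖a‖ * ‖b‖ := real_inner_le_norm a b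
        _ ≤ ‖a‖ * 1 := by nlinarith
        _ = ‖a‖ := mul_one _
      have hta : t * ‖a‖ = 1 := inv_mul_cancel₀ ha0.ne'
      rw [e1, e2]
      nlinarith [sq_nonneg (1 - t), sq_nonneg ‖a‖]
    calc ‖ballProj a - b‖ = Real.sqrt (‖t • a - b‖ ^ 2) := by rw [hP, Real.sqrt_sq (norm_nonneg _)]
    _ ≤ Real.sqrt (‖a - b‖ ^ 2) := Real.sqrt_le_sqrt key
    _ = ‖a - b‖ := Real.sqrt_sq (norm_nonneg _)


lemma integrable_of_ae_bound {X : Type*} [MeasurableSpace X] {μ : Measure X} [IsFiniteMeasure μ]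
    {f : X → ℝ} (hm : AEStronglyMeasurable f μ) {M : ℝ} (h : ∀ᵐ x ∂μ, |f x| ≤ M) :
    Integrable f μ :=
  Integrable.mono' (integrable_const M) hm (by simpa [Real.norm_eq_abs] using h)


set_option maxHeartbeats 1000000 in
lemma exists_good_approx {n d : ℕ} {Ω : Set (EuclideanSpace ℝ (Fin n))} (hΩ : IsOpen Ω)
    (ν : Measure (EuclideanSpace ℝ (Fin n))) [IsFiniteMeasure ν] (hνΩ : ν Ωᶜ = 0)
    (σ : EuclideanSpace ℝ (Fin n) → EuclideanSpace ℝ (Fin d)) (hσm : AEMeasurable σ ν)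
    (hσ1 : ∀ᵐ x ∂ν, ‖σ x‖ = 1) (η : ℝ) (hη : 0 < η) :
    ∃ τ : EuclideanSpace ℝ (Fin n) → EuclideanSpace ℝ (Fin d),
      Continuous τ ∧ HasCompactSupport τ ∧ tsupport τ ⊆ Ω ∧ (∀ x, ‖τ x‖ ≤ 1) ∧
      ∫ x, ‖σ x - τ x‖^2 ∂ν ≤ η^2 := by
  have hσsm : AEStronglyMeasurable σ ν := hσm.aestronglyMeasurable
  have hσL2 : MemLp σ (ENNReal.ofReal 2) ν :=
    MemLp.of_bound hσsm 1 (hσ1.mono fun x hx => le_of_eq hx)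
  obtain ⟨f₀, hf₀cs, hf₀close, hf₀cont, hf₀mem⟩ :=
    hσL2.exists_hasCompactSupport_integral_rpow_sub_le (p := 2) (by norm_num)
      (ε := η^2/4) (by positivity)
  set f₁ : EuclideanSpace ℝ (Fin n) → EuclideanSpace ℝ (Fin d) := fun x => ballProj (f₀ x) with hf₁
  have hf₁cont : Continuous f₁ := ballProj_continuous.comp hf₀cont
  have hf₁le : ∀ x, ‖f₁ x‖ ≤ 1 := fun x => ballProj_norm_le _
  obtain ⟨K', hK'Ω, hK'comp, hK'closed, hK'meas⟩ :=
    hΩ.measurableSet.exists_isCompact_isClosed_diff_lt (measure_ne_top ν Ω)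
      (by simp only [ne_eq, ENNReal.ofReal_eq_zero, not_le]; positivity :
        ENNReal.ofReal (η^2/8) ≠ 0)
  obtain ⟨L, hLcomp, hK'L, hLΩ⟩ := exists_compact_between hK'comp hΩ hK'Ω
  obtain ⟨χ, hχsupp, hχ1, hχmem⟩ := exists_tsupport_one_of_isOpen_isClosed isOpen_interior
    (hLcomp.closure_of_subset interior_subset) hK'closed hK'L
  have hχcs : HasCompactSupport (⇑χ) :=
    HasCompactSupport.of_support_subset_isCompact hLcomp
      ((subset_tsupport _).trans (hχsupp.trans interior_subset))
  have hχ01 : ∀ x, 0 ≤ χ x ∧ χ x ≤ 1 := fun x => ⟨(hχmem x).1, (hχmem x).2⟩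
  set τ : EuclideanSpace ℝ (Fin n) → EuclideanSpace ℝ (Fin d) := fun x => χ x • f₁ x with hτ
  have hτcont : Continuous τ := (map_continuous χ).smul hf₁cont
  have hτsupp : Function.support τ ⊆ Function.support (⇑χ) := by
    intro x hx
    simp only [hτ, Function.mem_support] at hx ⊢
    intro h0; exact hx (by rw [h0, zero_smul])
  have hτle : ∀ x, ‖τ x‖ ≤ 1 := by
    intro x
    rw [hτ, norm_smul, Real.norm_eq_abs, abs_of_nonneg (hχ01 x).1]
    calc χ x * ‖f₁ x‖ ≤ 1 * 1 :=
          mul_le_mul (hχ01 x).2 (hf₁le x) (norm_nonneg _) zero_le_one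
    _ = 1 := mul_one 1
  refine ⟨τ, hτcont, HasCompactSupport.mono hχcs hτsupp,
    (closure_mono hτsupp).trans (hχsupp.trans (interior_subset.trans hLΩ)), hτle, ?_⟩
  -- measurability and integrability
  have hm0 : AEMeasurable (fun x => σ x - f₀ x) ν := hσm.sub hf₀cont.aemeasurable
  have hm1 : AEMeasurable (fun x => σ x - f₁ x) ν := hσm.sub hf₁cont.aemeasurable
  have hm2 : AEMeasurable (fun x => σ x - τ x) ν := hσm.sub hτcont.aemeasurable
  have hc2 : Continuous (fun y : EuclideanSpace ℝ (Fin d) => ‖y‖^2) :=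
    (continuous_norm).pow 2
  have hi1 : Integrable (fun x => ‖σ x - f₁ x‖^2) ν := by
    apply integrable_of_ae_bound (hc2.measurable.comp_aemeasurable hm1).aestronglyMeasurable
      (M := 4)
    filter_upwards [hσ1] with x hx
    have h1 : ‖σ x - f₁ x‖ ≤ 2 := by
      calc ‖σ x - f₁ x‖ ≤ ‖σ x‖ + ‖f₁ x‖ := norm_sub_le _ _
      _ ≤ 1 + 1 := by rw [hx]; linarith [hf₁le x]
      _ = 2 := by norm_num
    simp only [Function.comp_apply]
    rw [abs_le]
    refine ⟨by nlinarith [sq_nonneg ‖σ x - f₁ x‖], by nlinarith [norm_nonneg (σ x - f₁ x)]⟩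
  have hi2 : Integrable (fun x => ‖σ x - τ x‖^2) ν := by
    apply integrable_of_ae_bound (hc2.measurable.comp_aemeasurable hm2).aestronglyMeasurable
      (M := 4)
    filter_upwards [hσ1] with x hx
    have h1 : ‖σ x - τ x‖ ≤ 2 := by
      calc ‖σ x - τ x‖ ≤ ‖σ x‖ + ‖τ x‖ := norm_sub_le _ _
      _ ≤ 1 + 1 := by rw [hx]; linarith [hτle x]
      _ = 2 := by norm_num
    simp only [Function.comp_apply]
    rw [abs_le]
    refine ⟨by nlinarith [sq_nonneg ‖σ x - τ x‖], by nlinarith [norm_nonneg (σ x - τ x)]⟩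
  have hiInd : Integrable ((K'ᶜ).indicator (fun _ => (1:ℝ))) ν :=
    (integrable_const (1:ℝ)).indicator hK'closed.measurableSet.compl
  have hpt : ∀ᵐ x ∂ν, ‖σ x - τ x‖^2 ≤
      2*‖σ x - f₁ x‖^2 + 2*((K'ᶜ).indicator (fun _ => (1:ℝ)) x) := by
    filter_upwards [hσ1] with x hx
    by_cases hxK : x ∈ K'
    · have hχx : χ x = 1 := hχ1 hxK
      have hττ : τ x = f₁ x := by rw [hτ]; simp [hχx]
      rw [hττ, Set.indicator_of_notMem (by simpa using hxK)]
      nlinarith [sq_nonneg ‖σ x - f₁ x‖]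
    · rw [Set.indicator_of_mem (by simpa using hxK)]
      have h1 : ‖σ x - τ x‖ ≤ ‖σ x - f₁ x‖ + 1 := by
        have hdec : σ x - τ x = (σ x - f₁ x) + (1 - χ x) • f₁ x := by
          rw [hτ]; module
        rw [hdec]
        calc ‖(σ x - f₁ x) + (1 - χ x) • f₁ x‖
            ≤ ‖σ x - f₁ x‖ + ‖(1 - χ x) • f₁ x‖ := norm_add_le _ _
        _ ≤ ‖σ x - f₁ x‖ + 1 := by
            have h2 : ‖(1 - χ x) • f₁ x‖ ≤ 1 := by
              rw [norm_smul, Real.norm_eq_abs, abs_of_nonneg (by linarith [(hχ01 x).2])]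
              calc (1 - χ x) * ‖f₁ x‖ ≤ 1 * 1 :=
                mul_le_mul (by linarith [(hχ01 x).1]) (hf₁le x) (norm_nonneg _) zero_le_one
              _ = 1 := mul_one 1
            linarith
      nlinarith [norm_nonneg (σ x - τ x), norm_nonneg (σ x - f₁ x),
        sq_nonneg (‖σ x - f₁ x‖ - 1)]
  have hrpow : ∫ x, ‖σ x - f₀ x‖ ^ (2:ℝ) ∂ν = ∫ x, ‖σ x - f₀ x‖ ^ (2:ℕ) ∂ν := by
    apply integral_congr_ae; filter_upwards with x
    rw [show ((2:ℝ) = ((2:ℕ):ℝ)) by norm_num, Real.rpow_natCast]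
  have hi0 : Integrable (fun x => ‖σ x - f₀ x‖^2) ν := by
    have h := (hσL2.sub hf₀mem).integrable_norm_rpow (by norm_num) (by norm_num)
    apply h.congr
    filter_upwards with x
    rw [ENNReal.toReal_ofReal (by norm_num : (0:ℝ) ≤ 2)]
    rw [show ((2:ℝ) = ((2:ℕ):ℝ)) by norm_num, Real.rpow_natCast]
    simp [Pi.sub_apply]
  have hptf₁ : ∀ᵐ x ∂ν, ‖σ x - f₁ x‖^2 ≤ ‖σ x - f₀ x‖^2 := by
    filter_upwards [hσ1] with x hx
    have h := ballProj_sub_le (f₀ x) (σ x) (le_of_eq hx)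
    rw [norm_sub_rev (σ x) (f₁ x), norm_sub_rev (σ x) (f₀ x)]
    have h1 : ‖f₁ x - σ x‖ = ‖ballProj (f₀ x) - σ x‖ := by rw [hf₁]
    rw [h1]
    nlinarith [norm_nonneg (ballProj (f₀ x) - σ x), norm_nonneg (f₀ x - σ x)]
  have hf₁close : ∫ x, ‖σ x - f₁ x‖^2 ∂ν ≤ η^2/4 := by
    calc ∫ x, ‖σ x - f₁ x‖^2 ∂ν ≤ ∫ x, ‖σ x - f₀ x‖^2 ∂ν :=
          integral_mono_ae hi1 hi0 hptf₁
    _ = ∫ x, ‖σ x - f₀ x‖ ^ (2:ℝ) ∂ν := hrpow.symm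
    _ ≤ η^2/4 := hf₀close
  have hind : ∫ x, (K'ᶜ).indicator (fun _ => (1:ℝ)) x ∂ν ≤ η^2/8 := by
    rw [integral_indicator_const (1:ℝ) hK'closed.measurableSet.compl, smul_eq_mul, mul_one]
    have hsub : K'ᶜ ⊆ (Ω \ K') ∪ Ωᶜ := by
      intro x hx
      by_cases hxΩ : x ∈ Ω
      · exact Or.inl ⟨hxΩ, hx⟩
      · exact Or.inr hxΩ
    have hc : ν K'ᶜ ≤ ENNReal.ofReal (η^2/8) := by
      calc ν K'ᶜ ≤ ν ((Ω \ K') ∪ Ωᶜ) := measure_mono hsub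
      _ ≤ ν (Ω \ K') + ν Ωᶜ := measure_union_le _ _
      _ = ν (Ω \ K') := by rw [hνΩ, add_zero]
      _ ≤ ENNReal.ofReal (η^2/8) := hK'meas.le
    exact ENNReal.toReal_le_of_le_ofReal (by positivity) hc
  calc ∫ x, ‖σ x - τ x‖^2 ∂ν
      ≤ ∫ x, (2*‖σ x - f₁ x‖^2 + 2*((K'ᶜ).indicator (fun _ => (1:ℝ)) x)) ∂ν :=
        integral_mono_ae hi2 ((hi1.const_mul 2).add (hiInd.const_mul 2)) hpt
  _ = 2*(∫ x, ‖σ x - f₁ x‖^2 ∂ν) + 2*(∫ x, (K'ᶜ).indicator (fun _ => (1:ℝ)) x ∂ν) := by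
        rw [integral_add (hi1.const_mul 2) (hiInd.const_mul 2), integral_const_mul,
          integral_const_mul]
  _ ≤ 2*(η^2/4) + 2*(η^2/8) := by
        exact add_le_add (by linarith [hf₁close]) (by linarith [hind])
  _ ≤ η^2 := by nlinarith

lemma tendsto_of_forall_eventually_abs_sub_le {f : ℕ → ℝ} {a : ℝ}
    (h : ∀ ε > (0:ℝ), ∀ᶠ k in atTop, |f k - a| ≤ ε) : Tendsto f atTop (nhds a) := by
  rw [Metric.tendsto_atTop]
  intro ε hε
  rcases (h (ε/2) (by linarith)).exists_forall_of_atTop with ⟨N, hN⟩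
  exact ⟨N, fun k hk => lt_of_le_of_lt (by simpa [Real.dist_eq] using hN k hk) (by linarith)⟩

lemma abs_integral_sub_le_of_ae {X : Type*} [MeasurableSpace X] {μ : Measure X}
    {f h b : X → ℝ} (hf : Integrable f μ) (hh : Integrable h μ) (hb : Integrable b μ)
    (hab : ∀ᵐ x ∂μ, |f x - h x| ≤ b x) :
    |∫ x, f x ∂μ - ∫ x, h x ∂μ| ≤ ∫ x, b x ∂μ := by
  rw [← integral_sub hf hh]
  have h1 : |∫ x, (f x - h x) ∂μ| ≤ ∫ x, |f x - h x| ∂μ := by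
    simpa [Real.norm_eq_abs] using norm_integral_le_integral_norm (μ := μ) (fun x => f x - h x)
  have h2 : ∫ x, |f x - h x| ∂μ ≤ ∫ x, b x ∂μ := integral_mono_ae (hf.sub hh).abs hb hab
  linarith

lemma coord_abs_le_norm {d : ℕ} (y : EuclideanSpace ℝ (Fin d)) (i : Fin d) : |y i| ≤ ‖y‖ := by
  rw [EuclideanSpace.norm_eq]
  have h : |y i|^2 ≤ ∑ j, ‖y j‖^2 := by
    have h0 := Finset.single_le_sum (f := fun j => ‖y j‖^2) (fun j _ => sq_nonneg _)
      (Finset.mem_univ i)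
    simpa [Real.norm_eq_abs, sq_abs] using h0
  calc |y i| = Real.sqrt (|y i|^2) := (Real.sqrt_sq (abs_nonneg _)).symm
  _ ≤ _ := Real.sqrt_le_sqrt h

lemma euclid_inner_eq_sum {d : ℕ} (a b : EuclideanSpace ℝ (Fin d)) :
    (inner ℝ a b : ℝ) = ∑ i, a i * b i := by
  simp [PiLp.inner_apply, RCLike.inner_apply, conj_trivial, mul_comm]

set_option maxHeartbeats 2000000 in
theorem reshetnyak_aux {n d : ℕ} {Ω : Set (EuclideanSpace ℝ (Fin n))} (hΩ : IsOpen Ω)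
    {C : Set (EuclideanSpace ℝ (Fin d))} (hCclosed : IsClosed C)
    (hCcone : ∀ r : ℝ, 0 ≤ r → ∀ x ∈ C, r • x ∈ C)
    {g : EuclideanSpace ℝ (Fin d) → ℝ} (hgcont : ContinuousOn g C)
    (hghom : ∀ r : ℝ, 0 < r → ∀ x ∈ C, g (r • x) = r * g x)
    (ν : Measure (EuclideanSpace ℝ (Fin n))) (νk : ℕ → Measure (EuclideanSpace ℝ (Fin n)))
    [IsFiniteMeasure ν] (hνk : ∀ k, IsFiniteMeasure (νk k)) (hνΩ : ν Ωᶜ = 0)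
    (σ : EuclideanSpace ℝ (Fin n) → EuclideanSpace ℝ (Fin d))
    (σk : ℕ → EuclideanSpace ℝ (Fin n) → EuclideanSpace ℝ (Fin d))
    (hσm : AEMeasurable σ ν) (hσkm : ∀ k, AEMeasurable (σk k) (νk k))
    (hσ : ∀ᵐ x ∂ν, σ x ∈ C ∧ ‖σ x‖ = 1)
    (hσk : ∀ k, ∀ᵐ x ∂(νk k), σk k x ∈ C ∧ ‖σk k x‖ = 1)
    (hweak : ∀ φ : EuclideanSpace ℝ (Fin n) → ℝ, Continuous φ → HasCompactSupport φ →
      tsupport φ ⊆ Ω → ∀ i : Fin d,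
      Tendsto (fun k => ∫ x, φ x * σk k x i ∂(νk k)) atTop (nhds (∫ x, φ x * σ x i ∂ν)))
    (hstrict : Tendsto (fun k => νk k Set.univ) atTop (nhds (ν Set.univ))) :
    Tendsto (fun k => ∫ x, g (σk k x) ∂(νk k)) atTop (nhds (∫ x, g (σ x) ∂ν)) := by
  classical
  by_cases hC : ∃ c ∈ C, c ≠ 0
  swap
  · push_neg at hC
    have hν0 : ν = 0 := by
      have h : ∀ᵐ x ∂ν, False := by
        filter_upwards [hσ] with x hx
        have h0 := hC _ hx.1
        rw [h0] at hx
        simpa using hx.2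
      exact ae_eq_bot.mp (Filter.eventually_false_iff_eq_bot.mp h)
    have hνk0 : ∀ k, νk k = 0 := by
      intro k
      have h : ∀ᵐ x ∂νk k, False := by
        filter_upwards [hσk k] with x hx
        have h0 := hC _ hx.1
        rw [h0] at hx
        simpa using hx.2
      exact ae_eq_bot.mp (Filter.eventually_false_iff_eq_bot.mp h)
    have hfun : (fun k => ∫ x, g (σk k x) ∂(νk k)) = fun _ => (0:ℝ) := by
      funext k; rw [hνk0 k]; simp
    rw [hν0, hfun]
    simpa using tendsto_const_nhds
  obtain ⟨c, hcC, hc0⟩ := hC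
  have h0C : (0 : EuclideanSpace ℝ (Fin d)) ∈ C := by
    have h := hCcone 0 le_rfl c hcC
    simpa using h
  have hg0 : g 0 = 0 := by
    have h1 : Tendsto (fun r : ℝ => r • c) (nhdsWithin 0 (Set.Ioi 0))
        (nhdsWithin 0 C) := by
      apply tendsto_nhdsWithin_of_tendsto_nhds_of_eventually_within
      · have h := ((continuous_id : Continuous fun r : ℝ => r).smul (continuous_const (y := c))).tendsto (0:ℝ)
        simp only [Pi.smul_apply', id_eq, zero_smul] at h
        exact h.mono_left nhdsWithin_le_nhds
      · filter_upwards [self_mem_nhdsWithin] with r hr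
        exact hCcone r (le_of_lt hr) c hcC
    have h2 : Tendsto (fun r : ℝ => g (r • c)) (nhdsWithin 0 (Set.Ioi 0)) (nhds (g 0)) :=
      ((hgcont 0 h0C).tendsto).comp h1
    have h3 : Tendsto (fun r : ℝ => r * g c) (nhdsWithin 0 (Set.Ioi 0)) (nhds 0) := by
      have h := ((continuous_id : Continuous fun r : ℝ => r).mul (continuous_const (y := g c))).tendsto (0:ℝ)
      simp only [Pi.mul_apply, id_eq, zero_mul] at h
      exact h.mono_left nhdsWithin_le_nhds
    have h4 : Tendsto (fun r : ℝ => g (r • c)) (nhdsWithin 0 (Set.Ioi 0)) (nhds 0) := by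
      apply Tendsto.congr' _ h3
      filter_upwards [self_mem_nhdsWithin] with r hr
      exact (hghom r hr c hcC).symm
    exact tendsto_nhds_unique h2 h4
  -- Tietze extension
  set K : Set (EuclideanSpace ℝ (Fin d)) := C ∩ Metric.closedBall 0 1 with hKdef
  have hKclosed : IsClosed K := hCclosed.inter Metric.isClosed_closedBall
  have hKcomp : IsCompact K :=
    (isCompact_closedBall (0 : EuclideanSpace ℝ (Fin d)) 1).of_isClosed_subset hKclosed
      Set.inter_subset_right
  haveI : CompactSpace K := isCompact_iff_compactSpace.mp hKcomp
  have hgK : Continuous fun y : K => g y :=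
    continuousOn_iff_continuous_restrict.mp (hgcont.mono Set.inter_subset_left)
  obtain ⟨G, hGnorm, hGrestrict⟩ :=
    BoundedContinuousFunction.exists_norm_eq_restrict_eq_of_closed
      (BoundedContinuousFunction.mkOfCompact ⟨_, hgK⟩) hKclosed
  have hGK : ∀ y, y ∈ K → G y = g y := by
    intro y hy
    have h := congrFun (congrArg DFunLike.coe hGrestrict) ⟨y, hy⟩
    simpa using h
  set M : ℝ := ‖G‖ with hMdef
  have hM : ∀ y, |G y| ≤ M := fun y => by
    simpa [Real.norm_eq_abs] using G.norm_coe_le_norm y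
  have hM0 : (0:ℝ) ≤ M := norm_nonneg _
  have hG0 : G 0 = 0 := by
    rw [hGK 0 ⟨h0C, Metric.mem_closedBall_self zero_le_one⟩, hg0]
  have hσK : ∀ᵐ x ∂ν, σ x ∈ K := by
    filter_upwards [hσ] with x hx
    exact ⟨hx.1, mem_closedBall_zero_iff.mpr hx.2.le⟩
  have hAeq : ∫ x, g (σ x) ∂ν = ∫ x, G (σ x) ∂ν :=
    integral_congr_ae (hσK.mono fun x hx => (hGK _ hx).symm)
  have hfunk : (fun k => ∫ x, g (σk k x) ∂(νk k)) = fun k => ∫ x, G (σk k x) ∂(νk k) := by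
    funext k
    apply integral_congr_ae
    filter_upwards [hσk k] with x hx
    exact (hGK _ ⟨hx.1, mem_closedBall_zero_iff.mpr hx.2.le⟩).symm
  rw [hAeq, hfunk]
  -- masses
  set T : ℝ := (ν Set.univ).toReal with hTdef
  have hT0 : (0:ℝ) ≤ T := ENNReal.toReal_nonneg
  have hTk : Tendsto (fun k => ((νk k) Set.univ).toReal) atTop (nhds T) :=
    (ENNReal.tendsto_toReal (measure_ne_top ν _)).comp hstrict
  apply tendsto_of_forall_eventually_abs_sub_le
  intro ε hε
  -- uniform continuity of G on the unit ball
  set ε₁ : ℝ := ε / (8*(T+1)) with hε₁def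
  have hε₁ : 0 < ε₁ := by positivity
  have hGu : UniformContinuousOn (⇑G) (Metric.closedBall 0 1) :=
    (isCompact_closedBall _ _).uniformContinuousOn_of_continuous G.continuous.continuousOn
  obtain ⟨δ, hδ0, hδ⟩ := (Metric.uniformContinuousOn_iff).mp hGu ε₁ hε₁
  set cst : ℝ := 2*M/δ^2 with hcstdef
  have hcst0 : (0:ℝ) ≤ cst := by positivity
  have key : ∀ a b : EuclideanSpace ℝ (Fin d), ‖a‖ ≤ 1 → ‖b‖ ≤ 1 →
      |G a - G b| ≤ ε₁ + cst*‖a - b‖^2 := by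
    intro a b ha hb
    by_cases hab : dist a b < δ
    · have h := hδ a (mem_closedBall_zero_iff.mpr ha) b (mem_closedBall_zero_iff.mpr hb) hab
      rw [Real.dist_eq] at h
      have h2 : (0:ℝ) ≤ cst*‖a - b‖^2 := by positivity
      linarith
    · push_neg at hab
      rw [dist_eq_norm] at hab
      have h1 : |G a - G b| ≤ 2*M := by
        calc |G a - G b| ≤ |G a| + |G b| := abs_sub _ _
        _ ≤ M + M := add_le_add (hM a) (hM b)
        _ = 2*M := by ring
      have h2 : 1 ≤ ‖a - b‖^2/δ^2 := by
        rw [le_div_iff₀ (by positivity), one_mul]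
        nlinarith [norm_nonneg (a - b)]
      calc |G a - G b| ≤ 2*M := h1
      _ ≤ 2*M*(‖a - b‖^2/δ^2) := by nlinarith
      _ = cst*‖a - b‖^2 := by rw [hcstdef]; ring
      _ ≤ ε₁ + cst*‖a - b‖^2 := by linarith
  -- choose η
  set F : ℝ → ℝ := fun t => cst*((t^2 + t*(T+1) + t) + t^2) +
    M*Real.sqrt (t^2 + t*(T+1) + t)*(T+2)/2 + t + M*t*(T+1)/2 with hFdef
  have hFcont : ContinuousAt F 0 := by
    apply ContinuousAt.add
    apply ContinuousAt.add
    apply ContinuousAt.add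
    · fun_prop
    · apply ContinuousAt.div_const
      apply ContinuousAt.mul
      apply ContinuousAt.mul
      · fun_prop
      · apply Real.continuous_sqrt.continuousAt.comp
        fun_prop
      · fun_prop
    · fun_prop
    · fun_prop
  have hF0 : F 0 = 0 := by simp [hFdef]
  have hFev : ∀ᶠ t in nhdsWithin (0:ℝ) (Set.Ioi 0), F t < ε/2 := by
    have h := hFcont.tendsto.eventually (gt_mem_nhds (by rw [hF0]; linarith : F 0 < ε/2))
    exact h.filter_mono nhdsWithin_le_nhds
  obtain ⟨η, hηF, hη⟩ := (hFev.and self_mem_nhdsWithin).exists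
  replace hη : (0:ℝ) < η := hη
  -- the approximation
  obtain ⟨τ, hτcont, hτcs, hτΩ, hτle, hτclose⟩ :=
    exists_good_approx hΩ ν hνΩ σ hσm (hσ.mono fun x hx => hx.2) η hη
  set ψ : EuclideanSpace ℝ (Fin n) → ℝ := fun x => G (τ x) with hψdef
  have hψcont : Continuous ψ := G.continuous.comp hτcont
  have hψsupp : Function.support ψ ⊆ Function.support τ := by
    intro x hx
    simp only [Function.mem_support] at hx ⊢
    intro h0
    exact hx (by rw [hψdef]; simp only; rw [h0, hG0])
  have hψcs : HasCompactSupport ψ := HasCompactSupport.mono hτcs hψsupp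
  have hψΩ : tsupport ψ ⊆ Ω := (closure_mono hψsupp).trans hτΩ
  have hψM : ∀ x, |ψ x| ≤ M := fun x => hM (τ x)
  -- coordinate test functions
  have hτi_cont : ∀ i : Fin d, Continuous (fun x => τ x i) := fun i =>
    ((continuous_apply i).comp (PiLp.continuous_ofLp 2 _)).comp hτcont
  have hτi_supp : ∀ i : Fin d, Function.support (fun x => τ x i) ⊆ Function.support τ := by
    intro i x hx
    simp only [Function.mem_support] at hx ⊢
    intro h0
    exact hx (by rw [h0]; rfl)
  have hτi_cs : ∀ i : Fin d, HasCompactSupport (fun x => τ x i) := fun i =>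
    HasCompactSupport.mono hτcs (hτi_supp i)
  have hτi_Ω : ∀ i : Fin d, tsupport (fun x => τ x i) ⊆ Ω := fun i =>
    (closure_mono (hτi_supp i)).trans hτΩ
  have hτi_le : ∀ i : Fin d, ∀ x, |τ x i| ≤ 1 := fun i x =>
    (coord_abs_le_norm (τ x) i).trans (hτle x)
  -- limits from weak convergence
  set S : ℝ := ∑ i, ∫ x, τ x i * σ x i ∂ν with hSdef
  set Q : ℝ := ∑ i, ∫ x, (ψ x * τ x i) * σ x i ∂ν with hQdef
  have hSk : Tendsto (fun k => ∑ i, ∫ x, τ x i * σk k x i ∂(νk k)) atTop (nhds S) := by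
    rw [hSdef]
    exact tendsto_finset_sum _ (fun i _ => hweak _ (hτi_cont i) (hτi_cs i) (hτi_Ω i) i)
  have hQk : Tendsto (fun k => ∑ i, ∫ x, (ψ x * τ x i) * σk k x i ∂(νk k)) atTop (nhds Q) := by
    rw [hQdef]
    refine tendsto_finset_sum _ (fun i _ => hweak _ (hψcont.mul (hτi_cont i)) ?_ ?_ i)
    · apply HasCompactSupport.mono hτcs
      intro x hx
      simp only [Function.mem_support] at hx ⊢
      intro h0
      apply hx
      have h1 : τ x i = 0 := by rw [h0]; rfl
      simp only [Pi.mul_apply, h1, mul_zero]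
    · refine (closure_mono ?_).trans hτΩ
      intro x hx
      simp only [Function.mem_support] at hx ⊢
      intro h0
      apply hx
      have h1 : τ x i = 0 := by rw [h0]; rfl
      simp only [Pi.mul_apply, h1, mul_zero]
  -- ν-side quantities and integrability
  have hmdiff : AEMeasurable (fun x => σ x - τ x) ν := hσm.sub hτcont.aemeasurable
  have hc2 : Continuous (fun y : EuclideanSpace ℝ (Fin d) => ‖y‖^2) := continuous_norm.pow 2
  have hc1 : Continuous (fun y : EuclideanSpace ℝ (Fin d) => ‖y‖) := continuous_norm
  have hiD2 : Integrable (fun x => ‖σ x - τ x‖^2) ν := by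
    apply integrable_of_ae_bound
      (hc2.measurable.comp_aemeasurable hmdiff).aestronglyMeasurable (M := 4)
    filter_upwards [hσ] with x hx
    simp only [Function.comp_apply]
    have h1 : ‖σ x - τ x‖ ≤ 2 := by
      calc ‖σ x - τ x‖ ≤ ‖σ x‖ + ‖τ x‖ := norm_sub_le _ _
      _ ≤ 1 + 1 := by rw [hx.2]; linarith [hτle x]
      _ = 2 := by norm_num
    rw [abs_le]
    constructor
    · nlinarith [sq_nonneg ‖σ x - τ x‖]
    · nlinarith [norm_nonneg (σ x - τ x)]
  have hiD1 : Integrable (fun x => ‖σ x - τ x‖) ν := by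
    apply integrable_of_ae_bound
      (hc1.measurable.comp_aemeasurable hmdiff).aestronglyMeasurable (M := 2)
    filter_upwards [hσ] with x hx
    simp only [Function.comp_apply]
    rw [abs_of_nonneg (norm_nonneg _)]
    calc ‖σ x - τ x‖ ≤ ‖σ x‖ + ‖τ x‖ := norm_sub_le _ _
    _ ≤ 1 + 1 := by rw [hx.2]; linarith [hτle x]
    _ = 2 := by norm_num
  have hiGσ : Integrable (fun x => G (σ x)) ν := by
    apply integrable_of_ae_bound
      (G.continuous.measurable.comp_aemeasurable hσm).aestronglyMeasurable (M := M)
    filter_upwards with x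
    exact hM _
  have hiψ : Integrable ψ ν := hψcont.integrable_of_hasCompactSupport hψcs
  have hiInn : Integrable (fun x => (inner ℝ (τ x) (σ x) : ℝ)) ν := by
    apply integrable_of_ae_bound (hτcont.aemeasurable.inner hσm).aestronglyMeasurable (M := 1)
    filter_upwards [hσ] with x hx
    calc |(inner ℝ (τ x) (σ x) : ℝ)| ≤ ‖τ x‖ * ‖σ x‖ := abs_real_inner_le_norm _ _
    _ ≤ 1 * 1 := by rw [hx.2]; exact mul_le_mul_of_nonneg_right (hτle x) zero_le_one
    _ = 1 := mul_one 1
  have hiψInn : Integrable (fun x => ψ x * (inner ℝ (τ x) (σ x) : ℝ)) ν := by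
    apply integrable_of_ae_bound
      ((hψcont.aemeasurable (μ := ν)).mul (hτcont.aemeasurable.inner hσm)).aestronglyMeasurable
      (M := M*1)
    filter_upwards [hσ] with x hx
    rw [Pi.mul_apply, abs_mul]
    apply mul_le_mul (hψM x) _ (abs_nonneg _) hM0
    calc |(inner ℝ (τ x) (σ x) : ℝ)| ≤ ‖τ x‖ * ‖σ x‖ := abs_real_inner_le_norm _ _
    _ ≤ 1 * 1 := by rw [hx.2]; exact mul_le_mul_of_nonneg_right (hτle x) zero_le_one
    _ = 1 := mul_one 1
  -- D1 bound on ν side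
  have hD1 : ∫ x, ‖σ x - τ x‖ ∂ν ≤ (η*T + η)/2 := by
    have hpt : ∀ᵐ x ∂ν, ‖σ x - τ x‖ ≤ (η + ‖σ x - τ x‖^2/η)/2 := by
      filter_upwards with x
      rw [le_div_iff₀ (by norm_num : (0:ℝ) < 2), ← sub_nonneg]
      have hexp : η + ‖σ x - τ x‖^2/η - ‖σ x - τ x‖*2 = (‖σ x - τ x‖ - η)^2/η := by
        field_simp
        ring
      rw [hexp]
      positivity
    calc ∫ x, ‖σ x - τ x‖ ∂ν ≤ ∫ x, (η + ‖σ x - τ x‖^2/η)/2 ∂ν :=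
          integral_mono_ae hiD1 (((integrable_const η).add (hiD2.div_const η)).div_const 2) hpt
    _ = (η*T + (∫ x, ‖σ x - τ x‖^2 ∂ν)/η)/2 := by
          rw [integral_div, integral_add (integrable_const η) (hiD2.div_const η), integral_const,
            smul_eq_mul, measureReal_def, ← hTdef, integral_div]
          ring
    _ ≤ (η*T + η)/2 := by
          have h : (∫ x, ‖σ x - τ x‖^2 ∂ν)/η ≤ η := by
            rw [div_le_iff₀ hη]
            nlinarith [hτclose]
          linarith
  -- expansions of S and Q through inner ℝ products
  have hSint : ∫ x, (inner ℝ (τ x) (σ x) : ℝ) ∂ν = S := by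
    calc ∫ x, (inner ℝ (τ x) (σ x) : ℝ) ∂ν = ∫ x, (∑ i, τ x i * σ x i) ∂ν := by
          apply integral_congr_ae
          filter_upwards with x
          rw [euclid_inner_eq_sum]
    _ = S := by
          rw [hSdef]
          apply integral_finset_sum
          intro i _
          apply integrable_of_ae_bound
            (((hτi_cont i).aemeasurable (μ := ν)).mul
              (((continuous_apply i).comp (PiLp.continuous_ofLp 2 _)).measurable.comp_aemeasurable hσm)).aestronglyMeasurable
            (M := 1)
          filter_upwards [hσ] with x hx
          rw [Pi.mul_apply, abs_mul]
          calc |τ x i| * |σ x i| ≤ 1 * 1 :=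
                mul_le_mul (hτi_le i x) ((coord_abs_le_norm _ i).trans hx.2.le)
                  (abs_nonneg _) zero_le_one
          _ = 1 := mul_one 1
  have hQint : ∫ x, ψ x * (inner ℝ (τ x) (σ x) : ℝ) ∂ν = Q := by
    calc ∫ x, ψ x * (inner ℝ (τ x) (σ x) : ℝ) ∂ν
        = ∫ x, (∑ i, (ψ x * τ x i) * σ x i) ∂ν := by
          apply integral_congr_ae
          filter_upwards with x
          rw [euclid_inner_eq_sum, Finset.mul_sum]
          apply Finset.sum_congr rfl
          intro i _
          ring
    _ = Q := by
          rw [hQdef]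
          apply integral_finset_sum
          intro i _
          apply integrable_of_ae_bound
            (((hψcont.mul (hτi_cont i)).aemeasurable (μ := ν)).mul
              (((continuous_apply i).comp (PiLp.continuous_ofLp 2 _)).measurable.comp_aemeasurable hσm)).aestronglyMeasurable
            (M := M)
          filter_upwards [hσ] with x hx
          rw [Pi.mul_apply, Pi.mul_apply, abs_mul, abs_mul]
          calc |ψ x| * |τ x i| * |σ x i| ≤ M * 1 * 1 := by
                apply mul_le_mul _ ((coord_abs_le_norm _ i).trans hx.2.le) (abs_nonneg _)
                  (by nlinarith [hM0])
                exact mul_le_mul (hψM x) (hτi_le i x) (abs_nonneg _) hM0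
          _ = M := by ring
  -- ν-side estimates
  have estBA : |∫ x, G (σ x) ∂ν - ∫ x, ψ x ∂ν| ≤ ε₁*T + cst*η^2 := by
    have hae : ∀ᵐ x ∂ν, |G (σ x) - ψ x| ≤ ε₁ + cst*‖σ x - τ x‖^2 := by
      filter_upwards [hσ] with x hx
      exact key (σ x) (τ x) hx.2.le (hτle x)
    calc |∫ x, G (σ x) ∂ν - ∫ x, ψ x ∂ν| ≤ ∫ x, (ε₁ + cst*‖σ x - τ x‖^2) ∂ν :=
          abs_integral_sub_le_of_ae hiGσ hiψ
            ((integrable_const ε₁).add (hiD2.const_mul cst)) hae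
    _ = ε₁*T + cst*(∫ x, ‖σ x - τ x‖^2 ∂ν) := by
          rw [integral_add (integrable_const ε₁) (hiD2.const_mul cst), integral_const,
            smul_eq_mul, measureReal_def, ← hTdef, integral_const_mul]
          ring
    _ ≤ ε₁*T + cst*η^2 := by
          have h := mul_le_mul_of_nonneg_left hτclose hcst0
          linarith
  have estQB : |∫ x, ψ x ∂ν - Q| ≤ M*((η*T + η)/2) := by
    rw [← hQint]
    have hae : ∀ᵐ x ∂ν, |ψ x - ψ x * (inner ℝ (τ x) (σ x) : ℝ)| ≤ M*‖σ x - τ x‖ := by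
      filter_upwards [hσ] with x hx
      have h1 : |1 - (inner ℝ (τ x) (σ x) : ℝ)| ≤ ‖σ x - τ x‖ := by
        have e : (inner ℝ (σ x - τ x) (σ x) : ℝ) = 1 - inner ℝ (τ x) (σ x) := by
          rw [inner_sub_left]
          have h2 : (inner ℝ (σ x) (σ x) : ℝ) = 1 := by
            rw [real_inner_self_eq_norm_mul_norm, hx.2, one_mul]
          rw [h2, real_inner_comm]
        rw [← e]
        calc |(inner ℝ (σ x - τ x) (σ x) : ℝ)| ≤ ‖σ x - τ x‖*‖σ x‖ := abs_real_inner_le_norm _ _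
        _ = ‖σ x - τ x‖ := by rw [hx.2, mul_one]
      calc |ψ x - ψ x * (inner ℝ (τ x) (σ x) : ℝ)|
          = |ψ x| * |1 - (inner ℝ (τ x) (σ x) : ℝ)| := by
            rw [← abs_mul, mul_sub, mul_one]
      _ ≤ M * ‖σ x - τ x‖ := mul_le_mul (hψM x) h1 (abs_nonneg _) hM0
    calc |∫ x, ψ x ∂ν - ∫ x, ψ x * (inner ℝ (τ x) (σ x) : ℝ) ∂ν|
        ≤ ∫ x, M*‖σ x - τ x‖ ∂ν :=
          abs_integral_sub_le_of_ae hiψ hiψInn (hiD1.const_mul M) hae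
    _ = M*(∫ x, ‖σ x - τ x‖ ∂ν) := integral_const_mul M _
    _ ≤ M*((η*T + η)/2) := mul_le_mul_of_nonneg_left hD1 hM0
  -- bound for 2T - 2S
  have hTS : 2*T - 2*S ≤ η^2 + η*(T+1) := by
    have hpt : ∀ᵐ x ∂ν, 2 - 2*(inner ℝ (τ x) (σ x) : ℝ) ≤ ‖σ x - τ x‖^2 + 2*‖σ x - τ x‖ := by
      filter_upwards [hσ] with x hx
      have e := norm_sub_sq_real (σ x) (τ x)
      rw [hx.2] at e
      have hsym : (inner ℝ (σ x) (τ x) : ℝ) = inner ℝ (τ x) (σ x) := real_inner_comm _ _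
      have hns : ‖σ x‖ - ‖τ x‖ ≤ ‖σ x - τ x‖ := norm_sub_norm_le _ _
      rw [hx.2] at hns
      nlinarith [hτle x, norm_nonneg (τ x), sq_nonneg (1 - ‖τ x‖)]
    have hint : ∫ x, (2 - 2*(inner ℝ (τ x) (σ x) : ℝ)) ∂ν = 2*T - 2*S := by
      rw [integral_sub (integrable_const 2) (hiInn.const_mul 2), integral_const, smul_eq_mul, measureReal_def, ← hTdef,
        integral_const_mul, hSint]
      ring
    have hmono : ∫ x, (2 - 2*(inner ℝ (τ x) (σ x) : ℝ)) ∂ν ≤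
        ∫ x, (‖σ x - τ x‖^2 + 2*‖σ x - τ x‖) ∂ν :=
      integral_mono_ae ((integrable_const 2).sub (hiInn.const_mul 2))
        (hiD2.add (hiD1.const_mul 2)) hpt
    have hval : ∫ x, (‖σ x - τ x‖^2 + 2*‖σ x - τ x‖) ∂ν ≤ η^2 + η*(T+1) := by
      rw [integral_add hiD2 (hiD1.const_mul 2), integral_const_mul]
      have h2 := hD1
      nlinarith [hτclose]
    linarith [hint.symm.le.trans (hmono.trans hval)]
  -- parameters for the k-side
  set β : ℝ := η^2 + η*(T+1) + η with hβdef
  have hβpos : 0 < β := by nlinarith [sq_nonneg η, mul_pos hη (by linarith : (0:ℝ) < T+1)]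
  set θ : ℝ := Real.sqrt β with hθdef
  have hθpos : 0 < θ := Real.sqrt_pos.mpr hβpos
  have hβθ : β/θ = θ := by rw [hθdef, hβdef]; exact Real.div_sqrt
  -- k-side integrability
  have hkD2i : ∀ k, Integrable (fun x => ‖σk k x - τ x‖^2) (νk k) := by
    intro k
    haveI := hνk k
    have hmk : AEMeasurable (fun x => σk k x - τ x) (νk k) := (hσkm k).sub hτcont.aemeasurable
    apply integrable_of_ae_bound
      (hc2.measurable.comp_aemeasurable hmk).aestronglyMeasurable (M := 4)
    filter_upwards [hσk k] with x hx
    simp only [Function.comp_apply]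
    have h1 : ‖σk k x - τ x‖ ≤ 2 := by
      calc ‖σk k x - τ x‖ ≤ ‖σk k x‖ + ‖τ x‖ := norm_sub_le _ _
      _ ≤ 1 + 1 := by rw [hx.2]; linarith [hτle x]
      _ = 2 := by norm_num
    rw [abs_le]
    constructor
    · nlinarith [sq_nonneg ‖σk k x - τ x‖]
    · nlinarith [norm_nonneg (σk k x - τ x)]
  have hkD1i : ∀ k, Integrable (fun x => ‖σk k x - τ x‖) (νk k) := by
    intro k
    haveI := hνk k
    have hmk : AEMeasurable (fun x => σk k x - τ x) (νk k) := (hσkm k).sub hτcont.aemeasurable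
    apply integrable_of_ae_bound
      (hc1.measurable.comp_aemeasurable hmk).aestronglyMeasurable (M := 2)
    filter_upwards [hσk k] with x hx
    simp only [Function.comp_apply]
    rw [abs_of_nonneg (norm_nonneg _)]
    calc ‖σk k x - τ x‖ ≤ ‖σk k x‖ + ‖τ x‖ := norm_sub_le _ _
    _ ≤ 1 + 1 := by rw [hx.2]; linarith [hτle x]
    _ = 2 := by norm_num
  have hkGi : ∀ k, Integrable (fun x => G (σk k x)) (νk k) := by
    intro k
    haveI := hνk k
    apply integrable_of_ae_bound
      (G.continuous.measurable.comp_aemeasurable (hσkm k)).aestronglyMeasurable (M := M)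
    filter_upwards with x
    exact hM _
  have hkψi : ∀ k, Integrable ψ (νk k) := by
    intro k
    haveI := hνk k
    exact hψcont.integrable_of_hasCompactSupport hψcs
  have hkInni : ∀ k, Integrable (fun x => (inner ℝ (τ x) (σk k x) : ℝ)) (νk k) := by
    intro k
    haveI := hνk k
    apply integrable_of_ae_bound
      (hτcont.aemeasurable.inner (hσkm k)).aestronglyMeasurable (M := 1)
    filter_upwards [hσk k] with x hx
    calc |(inner ℝ (τ x) (σk k x) : ℝ)| ≤ ‖τ x‖ * ‖σk k x‖ := abs_real_inner_le_norm _ _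
    _ ≤ 1 * 1 := by rw [hx.2]; exact mul_le_mul_of_nonneg_right (hτle x) zero_le_one
    _ = 1 := mul_one 1
  have hkψInni : ∀ k, Integrable (fun x => ψ x * (inner ℝ (τ x) (σk k x) : ℝ)) (νk k) := by
    intro k
    haveI := hνk k
    apply integrable_of_ae_bound
      ((hψcont.aemeasurable (μ := νk k)).mul
        (hτcont.aemeasurable.inner (hσkm k))).aestronglyMeasurable (M := M*1)
    filter_upwards [hσk k] with x hx
    rw [Pi.mul_apply, abs_mul]
    apply mul_le_mul (hψM x) _ (abs_nonneg _) hM0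
    calc |(inner ℝ (τ x) (σk k x) : ℝ)| ≤ ‖τ x‖ * ‖σk k x‖ := abs_real_inner_le_norm _ _
    _ ≤ 1 * 1 := by rw [hx.2]; exact mul_le_mul_of_nonneg_right (hτle x) zero_le_one
    _ = 1 := mul_one 1
  -- inner ℝ product expansions on the k side
  have hkSint : ∀ k, ∫ x, (inner ℝ (τ x) (σk k x) : ℝ) ∂(νk k) =
      ∑ i, ∫ x, τ x i * σk k x i ∂(νk k) := by
    intro k
    haveI := hνk k
    calc ∫ x, (inner ℝ (τ x) (σk k x) : ℝ) ∂(νk k)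
        = ∫ x, (∑ i, τ x i * σk k x i) ∂(νk k) := by
          apply integral_congr_ae
          filter_upwards with x
          rw [euclid_inner_eq_sum]
    _ = ∑ i, ∫ x, τ x i * σk k x i ∂(νk k) := by
          apply integral_finset_sum
          intro i _
          apply integrable_of_ae_bound
            (((hτi_cont i).aemeasurable (μ := νk k)).mul
              (((continuous_apply i).comp (PiLp.continuous_ofLp 2 _)).measurable.comp_aemeasurable (hσkm k))).aestronglyMeasurable
            (M := 1)
          filter_upwards [hσk k] with x hx
          rw [Pi.mul_apply, abs_mul]
          calc |τ x i| * |σk k x i| ≤ 1 * 1 :=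
                mul_le_mul (hτi_le i x) ((coord_abs_le_norm _ i).trans hx.2.le)
                  (abs_nonneg _) zero_le_one
          _ = 1 := mul_one 1
  have hkQint : ∀ k, ∫ x, ψ x * (inner ℝ (τ x) (σk k x) : ℝ) ∂(νk k) =
      ∑ i, ∫ x, (ψ x * τ x i) * σk k x i ∂(νk k) := by
    intro k
    haveI := hνk k
    calc ∫ x, ψ x * (inner ℝ (τ x) (σk k x) : ℝ) ∂(νk k)
        = ∫ x, (∑ i, (ψ x * τ x i) * σk k x i) ∂(νk k) := by
          apply integral_congr_ae
          filter_upwards with x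
          rw [euclid_inner_eq_sum, Finset.mul_sum]
          apply Finset.sum_congr rfl
          intro i _
          ring
    _ = ∑ i, ∫ x, (ψ x * τ x i) * σk k x i ∂(νk k) := by
          apply integral_finset_sum
          intro i _
          apply integrable_of_ae_bound
            (((hψcont.mul (hτi_cont i)).aemeasurable (μ := νk k)).mul
              (((continuous_apply i).comp (PiLp.continuous_ofLp 2 _)).measurable.comp_aemeasurable (hσkm k))).aestronglyMeasurable
            (M := M)
          filter_upwards [hσk k] with x hx
          rw [Pi.mul_apply, Pi.mul_apply, abs_mul, abs_mul]
          calc |ψ x| * |τ x i| * |σk k x i| ≤ M * 1 * 1 := by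
                apply mul_le_mul _ ((coord_abs_le_norm _ i).trans hx.2.le) (abs_nonneg _)
                  (by nlinarith [hM0])
                exact mul_le_mul (hψM x) (hτi_le i x) (abs_nonneg _) hM0
          _ = M := by ring
  -- the key k-side inequalities
  have hkD2 : ∀ k, ∫ x, ‖σk k x - τ x‖^2 ∂(νk k) ≤
      2*((νk k Set.univ).toReal) - 2*(∑ i, ∫ x, τ x i * σk k x i ∂(νk k)) := by
    intro k
    haveI := hνk k
    have hpt : ∀ᵐ x ∂(νk k), ‖σk k x - τ x‖^2 ≤ 2 - 2*(inner ℝ (τ x) (σk k x) : ℝ) := by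
      filter_upwards [hσk k] with x hx
      have e := norm_sub_sq_real (σk k x) (τ x)
      rw [hx.2, one_pow] at e
      have hsym : (inner ℝ (σk k x) (τ x) : ℝ) = inner ℝ (τ x) (σk k x) := real_inner_comm _ _
      have hτ2 : ‖τ x‖^2 ≤ 1 := by nlinarith [hτle x, norm_nonneg (τ x)]
      linarith [e, hsym, hτ2]
    calc ∫ x, ‖σk k x - τ x‖^2 ∂(νk k)
        ≤ ∫ x, (2 - 2*(inner ℝ (τ x) (σk k x) : ℝ)) ∂(νk k) :=
          integral_mono_ae (hkD2i k) ((integrable_const 2).sub ((hkInni k).const_mul 2)) hpt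
    _ = 2*((νk k Set.univ).toReal) - 2*(∑ i, ∫ x, τ x i * σk k x i ∂(νk k)) := by
          rw [integral_sub (integrable_const 2) ((hkInni k).const_mul 2), integral_const,
            smul_eq_mul, measureReal_def, integral_const_mul, hkSint k]
          ring
  have hkD1 : ∀ k, ∫ x, ‖σk k x - τ x‖ ∂(νk k) ≤
      (θ*((νk k Set.univ).toReal) + (∫ x, ‖σk k x - τ x‖^2 ∂(νk k))/θ)/2 := by
    intro k
    haveI := hνk k
    have hpt : ∀ᵐ x ∂(νk k), ‖σk k x - τ x‖ ≤ (θ + ‖σk k x - τ x‖^2/θ)/2 := by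
      filter_upwards with x
      rw [le_div_iff₀ (by norm_num : (0:ℝ) < 2), ← sub_nonneg]
      have hexp : θ + ‖σk k x - τ x‖^2/θ - ‖σk k x - τ x‖*2 = (‖σk k x - τ x‖ - θ)^2/θ := by
        field_simp
        ring
      rw [hexp]
      positivity
    calc ∫ x, ‖σk k x - τ x‖ ∂(νk k) ≤ ∫ x, (θ + ‖σk k x - τ x‖^2/θ)/2 ∂(νk k) :=
          integral_mono_ae (hkD1i k)
            (((integrable_const θ).add ((hkD2i k).div_const θ)).div_const 2) hpt
    _ = (θ*((νk k Set.univ).toReal) + (∫ x, ‖σk k x - τ x‖^2 ∂(νk k))/θ)/2 := by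
          rw [integral_div, integral_add (integrable_const θ) ((hkD2i k).div_const θ),
            integral_const, smul_eq_mul, measureReal_def, integral_div]
          ring
  have estABk : ∀ k, |∫ x, G (σk k x) ∂(νk k) - ∫ x, ψ x ∂(νk k)| ≤
      ε₁*((νk k Set.univ).toReal) + cst*(∫ x, ‖σk k x - τ x‖^2 ∂(νk k)) := by
    intro k
    haveI := hνk k
    have hae : ∀ᵐ x ∂(νk k), |G (σk k x) - ψ x| ≤ ε₁ + cst*‖σk k x - τ x‖^2 := by
      filter_upwards [hσk k] with x hx
      exact key (σk k x) (τ x) hx.2.le (hτle x)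
    calc |∫ x, G (σk k x) ∂(νk k) - ∫ x, ψ x ∂(νk k)|
        ≤ ∫ x, (ε₁ + cst*‖σk k x - τ x‖^2) ∂(νk k) :=
          abs_integral_sub_le_of_ae (hkGi k) (hkψi k)
            ((integrable_const ε₁).add ((hkD2i k).const_mul cst)) hae
    _ = ε₁*((νk k Set.univ).toReal) + cst*(∫ x, ‖σk k x - τ x‖^2 ∂(νk k)) := by
          rw [integral_add (integrable_const ε₁) ((hkD2i k).const_mul cst), integral_const,
            smul_eq_mul, measureReal_def, integral_const_mul]
          ring
  have estBQk : ∀ k, |∫ x, ψ x ∂(νk k) - ∑ i, ∫ x, (ψ x * τ x i) * σk k x i ∂(νk k)| ≤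
      M*(∫ x, ‖σk k x - τ x‖ ∂(νk k)) := by
    intro k
    haveI := hνk k
    rw [← hkQint k]
    have hae : ∀ᵐ x ∂(νk k), |ψ x - ψ x * (inner ℝ (τ x) (σk k x) : ℝ)| ≤
        M*‖σk k x - τ x‖ := by
      filter_upwards [hσk k] with x hx
      have h1 : |1 - (inner ℝ (τ x) (σk k x) : ℝ)| ≤ ‖σk k x - τ x‖ := by
        have e : (inner ℝ (σk k x - τ x) (σk k x) : ℝ) = 1 - inner ℝ (τ x) (σk k x) := by
          rw [inner_sub_left]
          have h2 : (inner ℝ (σk k x) (σk k x) : ℝ) = 1 := by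
            rw [real_inner_self_eq_norm_mul_norm, hx.2, one_mul]
          rw [h2, real_inner_comm]
        rw [← e]
        calc |(inner ℝ (σk k x - τ x) (σk k x) : ℝ)| ≤ ‖σk k x - τ x‖*‖σk k x‖ :=
              abs_real_inner_le_norm _ _
        _ = ‖σk k x - τ x‖ := by rw [hx.2, mul_one]
      calc |ψ x - ψ x * (inner ℝ (τ x) (σk k x) : ℝ)|
          = |ψ x| * |1 - (inner ℝ (τ x) (σk k x) : ℝ)| := by
            rw [← abs_mul, mul_sub, mul_one]
      _ ≤ M * ‖σk k x - τ x‖ := mul_le_mul (hψM x) h1 (abs_nonneg _) hM0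
    calc |∫ x, ψ x ∂(νk k) - ∫ x, ψ x * (inner ℝ (τ x) (σk k x) : ℝ) ∂(νk k)|
        ≤ ∫ x, M*‖σk k x - τ x‖ ∂(νk k) :=
          abs_integral_sub_le_of_ae (hkψi k) (hkψInni k) ((hkD1i k).const_mul M) hae
    _ = M*(∫ x, ‖σk k x - τ x‖ ∂(νk k)) := integral_const_mul M _
  -- the eventual statements
  have evT : ∀ᶠ k in atTop, ((νk k) Set.univ).toReal ≤ T + 1 :=
    hTk.eventually (eventually_le_nhds (by linarith))
  have evD : ∀ᶠ k in atTop, ∫ x, ‖σk k x - τ x‖^2 ∂(νk k) ≤ β := by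
    have hls : Tendsto (fun k => 2*((νk k Set.univ).toReal) -
        2*(∑ i, ∫ x, τ x i * σk k x i ∂(νk k))) atTop (nhds (2*T - 2*S)) :=
      ((hTk.const_mul 2).sub (hSk.const_mul 2))
    have h := hls.eventually (eventually_le_nhds
      (by linarith : 2*T - 2*S < 2*T - 2*S + η))
    filter_upwards [h] with k hk
    calc ∫ x, ‖σk k x - τ x‖^2 ∂(νk k)
        ≤ 2*((νk k Set.univ).toReal) - 2*(∑ i, ∫ x, τ x i * σk k x i ∂(νk k)) := hkD2 k
    _ ≤ 2*T - 2*S + η := hk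
    _ ≤ β := by rw [hβdef]; linarith [hTS]
  have evQ : ∀ᶠ k in atTop,
      |(∑ i, ∫ x, (ψ x * τ x i) * σk k x i ∂(νk k)) - Q| ≤ η := by
    have h := hQk.eventually (Metric.closedBall_mem_nhds Q hη)
    filter_upwards [h] with k hk
    simpa [Metric.mem_closedBall, Real.dist_eq] using hk
  -- final assembly
  filter_upwards [evT, evD, evQ] with k hTk1 hDk1 hQk1
  have hDk0 : (0:ℝ) ≤ ∫ x, ‖σk k x - τ x‖^2 ∂(νk k) := by
    haveI := hνk k
    apply integral_nonneg
    intro x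
    positivity
  have h1 : |∫ x, G (σk k x) ∂(νk k) - ∫ x, ψ x ∂(νk k)| ≤ ε₁*(T+1) + cst*β := by
    calc |∫ x, G (σk k x) ∂(νk k) - ∫ x, ψ x ∂(νk k)|
        ≤ ε₁*((νk k Set.univ).toReal) + cst*(∫ x, ‖σk k x - τ x‖^2 ∂(νk k)) := estABk k
    _ ≤ ε₁*(T+1) + cst*β := by
          have ha := mul_le_mul_of_nonneg_left hTk1 hε₁.le
          have hb := mul_le_mul_of_nonneg_left hDk1 hcst0
          linarith
  have h2 : |∫ x, ψ x ∂(νk k) - ∑ i, ∫ x, (ψ x * τ x i) * σk k x i ∂(νk k)| ≤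
      M*(θ*(T+2)/2) := by
    calc |∫ x, ψ x ∂(νk k) - ∑ i, ∫ x, (ψ x * τ x i) * σk k x i ∂(νk k)|
        ≤ M*(∫ x, ‖σk k x - τ x‖ ∂(νk k)) := estBQk k
    _ ≤ M*((θ*((νk k Set.univ).toReal) + (∫ x, ‖σk k x - τ x‖^2 ∂(νk k))/θ)/2) :=
          mul_le_mul_of_nonneg_left (hkD1 k) hM0
    _ ≤ M*((θ*(T+1) + β/θ)/2) := by
          apply mul_le_mul_of_nonneg_left _ hM0
          have ha := mul_le_mul_of_nonneg_left hTk1 hθpos.le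
          have hb : (∫ x, ‖σk k x - τ x‖^2 ∂(νk k))/θ ≤ β/θ :=
            (div_le_div_iff_of_pos_right hθpos).mpr hDk1
          linarith
    _ = M*(θ*(T+2)/2) := by rw [hβθ]; ring
  have htri : |∫ x, G (σk k x) ∂(νk k) - ∫ x, G (σ x) ∂ν| ≤
      |∫ x, G (σk k x) ∂(νk k) - ∫ x, ψ x ∂(νk k)| +
      |∫ x, ψ x ∂(νk k) - ∑ i, ∫ x, (ψ x * τ x i) * σk k x i ∂(νk k)| +
      |(∑ i, ∫ x, (ψ x * τ x i) * σk k x i ∂(νk k)) - Q| +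
      |Q - ∫ x, ψ x ∂ν| +
      |∫ x, ψ x ∂ν - ∫ x, G (σ x) ∂ν| := by
    have t1 := abs_sub_le (∫ x, G (σk k x) ∂(νk k)) (∫ x, ψ x ∂(νk k)) (∫ x, G (σ x) ∂ν)
    have t2 := abs_sub_le (∫ x, ψ x ∂(νk k))
      (∑ i, ∫ x, (ψ x * τ x i) * σk k x i ∂(νk k)) (∫ x, G (σ x) ∂ν)
    have t3 := abs_sub_le (∑ i, ∫ x, (ψ x * τ x i) * σk k x i ∂(νk k)) Q (∫ x, G (σ x) ∂ν)
    have t4 := abs_sub_le Q (∫ x, ψ x ∂ν) (∫ x, G (σ x) ∂ν)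
    linarith
  have hQB : |Q - ∫ x, ψ x ∂ν| ≤ M*((η*T + η)/2) := by
    rw [abs_sub_comm]
    exact estQB
  have hBA : |∫ x, ψ x ∂ν - ∫ x, G (σ x) ∂ν| ≤ ε₁*T + cst*η^2 := by
    rw [abs_sub_comm]
    exact estBA
  -- numeric conclusion
  have hFη : F η = cst*(β + η^2) + M*θ*(T+2)/2 + η + M*η*(T+1)/2 := by
    simp only [hFdef, hβdef, hθdef]
  have hε₁T1 : ε₁*(T+1) = ε/8 := by
    rw [hε₁def]
    field_simp
  have hε₁T : ε₁*T ≤ ε/8 := by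
    have h := mul_le_mul_of_nonneg_left (by linarith : T ≤ T+1) hε₁.le
    linarith
  have hMη : M*((η*T + η)/2) = M*η*(T+1)/2 := by ring
  have hFineq : F η < ε/2 := hηF
  calc |∫ x, G (σk k x) ∂(νk k) - ∫ x, G (σ x) ∂ν|
      ≤ (ε₁*(T+1) + cst*β) + M*(θ*(T+2)/2) + η + M*((η*T + η)/2) + (ε₁*T + cst*η^2) :=
        htri.trans (add_le_add (add_le_add (add_le_add (add_le_add h1 h2) hQk1) hQB) hBA)
  _ ≤ ε/4 + F η := by
        rw [hFη, hε₁T1]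
        have he1 : M*(θ*(T+2)/2) = M*θ*(T+2)/2 := by ring
        have he2 : cst*(β + η^2) = cst*β + cst*η^2 := by ring
        linarith [hε₁T, hMη]
  _ ≤ ε := by linarith


/-- Reshetnyak continuity (Theorem 3.1(2)). With measures encoded by polar decompositions
`μ_k = σ_k ν_k` taking values in a closed convex cone `C`, if `g : C → [0,∞)` is continuous
and positively `1`-homogeneous and `μ_k → μ` strictly (weak-* convergence plus convergence
of the total masses `|μ_k|(Ω) → |μ|(Ω)`), then
`∫ g(dμ_k/d|μ_k|) d|μ_k| → ∫ g(dμ/d|μ|) d|μ|`. -/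
theorem reshetnyak_continuity {n d : ℕ} (Ω : Set (EuclideanSpace ℝ (Fin n))) (hΩ : IsOpen Ω)
    (C : Set (Fin d → ℝ)) (hCclosed : IsClosed C) (hCconv : Convex ℝ C)
    (hCcone : ∀ r : ℝ, 0 ≤ r → ∀ x ∈ C, r • x ∈ C)
    (g : (Fin d → ℝ) → ℝ) (hgcont : ContinuousOn g C) (hgpos : ∀ x ∈ C, 0 ≤ g x)
    (hghom : ∀ r : ℝ, 0 < r → ∀ x ∈ C, g (r • x) = r * g x)
    (ν : Measure (EuclideanSpace ℝ (Fin n))) (νk : ℕ → Measure (EuclideanSpace ℝ (Fin n)))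
    [IsFiniteMeasure ν] (hνk : ∀ k, IsFiniteMeasure (νk k))
    (hνΩ : ν Ωᶜ = 0) (hνkΩ : ∀ k, νk k Ωᶜ = 0)
    (σ : EuclideanSpace ℝ (Fin n) → Fin d → ℝ)
    (σk : ℕ → EuclideanSpace ℝ (Fin n) → Fin d → ℝ)
    (hσm : AEMeasurable σ ν) (hσkm : ∀ k, AEMeasurable (σk k) (νk k))
    (hσ : ∀ᵐ x ∂ν, σ x ∈ C ∧ ∑ i, σ x i ^ 2 = 1)
    (hσk : ∀ k, ∀ᵐ x ∂(νk k), σk k x ∈ C ∧ ∑ i, σk k x i ^ 2 = 1)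
    (hweak : ∀ φ : EuclideanSpace ℝ (Fin n) → ℝ, Continuous φ → HasCompactSupport φ →
      tsupport φ ⊆ Ω → ∀ i : Fin d,
      Tendsto (fun k => ∫ x, φ x * σk k x i ∂(νk k)) atTop (nhds (∫ x, φ x * σ x i ∂ν)))
    (hstrict : Tendsto (fun k => νk k Set.univ) atTop (nhds (ν Set.univ))) :
    Tendsto (fun k => ∫ x, g (σk k x) ∂(νk k)) atTop (nhds (∫ x, g (σ x) ∂ν)) := by
  refine reshetnyak_aux (C := WithLp.ofLp ⁻¹' C) (g := fun y => g (WithLp.ofLp y)) hΩ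
    (hCclosed.preimage (PiLp.continuous_ofLp 2 _)) (fun r hr x hx => hCcone r hr _ hx)
    (hgcont.comp (PiLp.continuous_ofLp 2 _).continuousOn (Set.mapsTo_preimage _ _))
    (fun r hr x hx => hghom r hr _ hx) ν νk hνk hνΩ (fun x => WithLp.toLp 2 (σ x))
    (fun k x => WithLp.toLp 2 (σk k x))
    ((PiLp.continuous_toLp 2 _).measurable.comp_aemeasurable hσm)
    (fun k => (PiLp.continuous_toLp 2 _).measurable.comp_aemeasurable (hσkm k)) ?_ ?_
    hweak hstrict
  · filter_upwards [hσ] with x hx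
    refine ⟨hx.1, ?_⟩
    rw [EuclideanSpace.norm_eq]
    simp only [Real.norm_eq_abs, sq_abs, WithLp.ofLp_toLp]
    rw [hx.2, Real.sqrt_one]
  · intro k
    filter_upwards [hσk k] with x hx
    refine ⟨hx.1, ?_⟩
    rw [EuclideanSpace.norm_eq]
    simp only [Real.norm_eq_abs, sq_abs, WithLp.ofLp_toLp]
    rw [hx.2, Real.sqrt_one]
end

section
/- The trace-free symmetric gradient E^D u := (1/2)(∇u + (∇u)^T) − (1/n) div(u) I_n, viewed as a first-order operator from ℝ^n-valued maps on ℝ^n to n×n matrices, is C-elliptic for every n ≥ 3, i.e., its complexified symbol ξ ↦ (1/2)(v ξ^T + ξ v^T) − (1/n)⟨v, ξ⟩ I_n is injective in v ∈ ℂ^n for every ξ ∈ ℂ^n \ {0}; for n = 2 it is not C-elliptic. -/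
open Finset

/-- The complexified symbol of the trace-free symmetric gradient `E^D`:
`ξ ↦ (1/2)(v ξᵀ + ξ vᵀ) − (1/n)⟨v,ξ⟩ Iₙ`. -/
noncomputable def devSymSymbol (n : ℕ) (ξ v : Fin n → ℂ) : Matrix (Fin n) (Fin n) ℂ :=
  fun i j => (v i * ξ j + ξ i * v j) / 2 -
    if i = j then (∑ k, v k * ξ k) / (n : ℂ) else 0

lemma devSymSymbol_sub (n : ℕ) (ξ v w : Fin n → ℂ) :
    devSymSymbol n ξ (v - w) = devSymSymbol n ξ v - devSymSymbol n ξ w := by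
  funext i j
  simp only [devSymSymbol, Pi.sub_apply, Matrix.sub_apply]
  rw [show (∑ k, (v k - w k) * ξ k) = (∑ k, v k * ξ k) - ∑ k, w k * ξ k from by
    rw [← Finset.sum_sub_distrib]; exact Finset.sum_congr rfl fun k _ => by ring]
  split_ifs <;> ring

lemma devSymSymbol_key (n : ℕ) (hn : 3 ≤ n) (ξ u : Fin n → ℂ) (hξ : ξ ≠ 0)
    (h : devSymSymbol n ξ u = 0) : u = 0 := by
  have hnC : (n : ℂ) ≠ 0 := Nat.cast_ne_zero.mpr (by omega)
  set s : ℂ := ∑ k, u k * ξ k with hs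
  have hd : ∀ i, u i * ξ i = s / n := by
    intro i
    have h1 := congrFun (congrFun h i) i
    simp only [devSymSymbol, if_pos rfl, Matrix.zero_apply, sub_eq_zero] at h1
    rw [← hs] at h1
    field_simp at h1 ⊢
    rw [if_pos trivial] at h1
    have h2 : u i * ξ i = s / n := by linear_combination h1/2
    rw [h2]; field_simp
  have ho : ∀ i j, i ≠ j → u i * ξ j + ξ i * u j = 0 := by
    intro i j hij
    have h1 := congrFun (congrFun h i) j
    simp only [devSymSymbol, if_neg hij, Matrix.zero_apply, sub_zero, div_eq_zero_iff] at h1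
    rcases h1 with h1 | h1
    · exact h1
    · norm_num at h1
  obtain ⟨i, hi⟩ : ∃ i, ξ i ≠ 0 := by
    by_contra hc; push_neg at hc; exact hξ (funext fun i => hc i)
  have hform : ∀ m, m ≠ i → u m = -(u i * ξ m) / ξ i := by
    intro m hm
    have h1 := ho i m (Ne.symm hm)
    field_simp
    linear_combination h1
  by_cases hui : u i = 0
  · funext m
    by_cases hm : m = i
    · simpa [hm] using hui
    · simp [hform m hm, hui]
  · exfalso
    obtain ⟨j, hj, k, hk, hjk⟩ := Finset.one_lt_card.mp (show 1 < (Finset.univ.erase i).card by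
      rw [Finset.card_erase_of_mem (mem_univ i), Finset.card_univ, Fintype.card_fin]; omega)
    have hji : j ≠ i := Finset.ne_of_mem_erase hj
    have hki : k ≠ i := Finset.ne_of_mem_erase hk
    have hB : ∀ m, m ≠ i → ξ m ^ 2 = -ξ i ^ 2 := by
      intro m hm
      have h1 := hd m
      rw [hform m hm, ← hd i] at h1
      -- -(u i * ξ m)/ξ i * ξ m = u i * ξ i
      have h2 : -(u i * ξ m ^ 2) = u i * ξ i ^ 2 := by
        field_simp at h1
        linear_combination (u i) * h1
      have h3 : u i * (ξ m ^ 2 + ξ i ^ 2) = 0 := by linear_combination -h2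
      rcases mul_eq_zero.mp h3 with h4 | h4
      · exact absurd h4 hui
      · linear_combination h4
    have hC : ξ j * ξ k = 0 := by
      have h1 := ho j k hjk
      rw [hform j hji, hform k hki] at h1
      have h2 : u i * (ξ j * ξ k) * ξ i = 0 := by
        field_simp at h1
        linear_combination (-ξ i / 2) * h1
      rcases mul_eq_zero.mp h2 with h3 | h3
      · rcases mul_eq_zero.mp h3 with h4 | h4
        · exact absurd h4 hui
        · exact h4
      · exact absurd h3 hi
    have : ξ i ^ 2 = 0 := by
      rcases mul_eq_zero.mp hC with h4 | h4
      · have := hB j hji; rw [h4] at this; linear_combination this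
      · have := hB k hki; rw [h4] at this; linear_combination this
    exact hi (pow_eq_zero_iff (by norm_num) |>.mp this)

/-- The trace-free symmetric gradient is `ℂ`-elliptic for every `n ≥ 3` (its complexified
symbol is injective for every `ξ ≠ 0`), but not for `n = 2`. -/
theorem devSymmetricGradient_CElliptic_iff :
    (∀ n : ℕ, 3 ≤ n → ∀ ξ : Fin n → ℂ, ξ ≠ 0 →
      Function.Injective (fun v : Fin n → ℂ => devSymSymbol n ξ v)) ∧
    ¬ (∀ ξ : Fin 2 → ℂ, ξ ≠ 0 →
      Function.Injective (fun v : Fin 2 → ℂ => devSymSymbol 2 ξ v)) := by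
  constructor
  · intro n hn ξ hξ v w hvw
    have hvw' : devSymSymbol n ξ v = devSymSymbol n ξ w := hvw
    have h0 : devSymSymbol n ξ (v - w) = 0 := by
      rw [devSymSymbol_sub, hvw', sub_self]
    have := devSymSymbol_key n hn ξ (v - w) hξ h0
    exact sub_eq_zero.mp this
  · intro h
    have hξ : (![1, Complex.I] : Fin 2 → ℂ) ≠ 0 := by
      intro hc
      have := congrFun hc 0
      simp at this
    have heq : devSymSymbol 2 ![1, Complex.I] ![1, -Complex.I] =
        devSymSymbol 2 ![1, Complex.I] 0 := by
      funext i j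
      fin_cases i <;> fin_cases j <;>
        simp [devSymSymbol, Fin.sum_univ_two]
    have := h ![1, Complex.I] hξ heq
    have h0 := congrFun this 0
    simp at h0
end
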